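/- arXiv:1912.04027 — 4 statements merged into one kernel-verified Lean document; each statement's English description precedes it below -/
import Mathlib

section
/- Consider the non-autonomous controlled inverted pendulum equation φ̈ = u(φ, φ̇, t)·sin φ − cos φ + v(φ, φ̇, t) + f(t)·sin φ, where u, v : ℝ³ → ℝ and f : ℝ → ℝ are smooth, the equation defines a continuous semi-process on ℝ² (in coordinates (φ, φ̇)), |v(0,0,t)| < 1 and |v(π,0,t)| < 1 for all t, and (π/2, 0) is a uniformly Lyapunov stable equilibrium. Then (π/2, 0) is not globally attractive: there exists a solution φ(t) with 0 < φ(t) < π for all t ≥ 0 not converging to (π/2, 0). -/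
open Set Filter Topology

section PendulumAux

lemma open_forall_lt (F : ℝ × ℝ → ℝ) (hF : Continuous F) (t c : ℝ) :
    IsOpen {s : ℝ | ∀ r ∈ Set.Icc 0 t, F (s, r) < c} := by
  rw [isOpen_iff_forall_mem_open]
  intro s₀ hs₀
  obtain ⟨w, z, hw, _, hsw, htz, hsub⟩ := generalized_tube_lemma isCompact_singleton
    (isCompact_Icc (a := (0:ℝ)) (b := t)) (hF.isOpen_preimage _ isOpen_Iio)
    (by rintro ⟨a, b⟩ ⟨rfl, hb⟩; exact hs₀ b hb)
  refine ⟨w, fun s hs r hr => hsub ⟨hs, htz hr⟩, hw, hsw rfl⟩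

lemma open_forall_gt (F : ℝ × ℝ → ℝ) (hF : Continuous F) (t c : ℝ) :
    IsOpen {s : ℝ | ∀ r ∈ Set.Icc 0 t, c < F (s, r)} := by
  have h := open_forall_lt (fun q => -F q) hF.neg t (-c)
  convert h using 2 with s
  simp [neg_lt_neg_iff]



lemma pendulum_fall_zero
    (u v : ℝ × ℝ × ℝ → ℝ) (f : ℝ → ℝ) (Φ : ℝ × ℝ → ℝ → ℝ → ℝ × ℝ)
    (hΦ0 : ∀ p t₀, Φ p t₀ 0 = p)
    (hode1 : ∀ (p : ℝ × ℝ) (t₀ : ℝ), ∀ t ≥ (0 : ℝ),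
      HasDerivWithinAt (fun s => (Φ p t₀ s).1) ((Φ p t₀ t).2) (Set.Ici 0) t)
    (hode2 : ∀ (p : ℝ × ℝ) (t₀ : ℝ), ∀ t ≥ (0 : ℝ),
      HasDerivWithinAt (fun s => (Φ p t₀ s).2)
        (u ((Φ p t₀ t).1, (Φ p t₀ t).2, t₀ + t) * Real.sin (Φ p t₀ t).1
          - Real.cos (Φ p t₀ t).1 + v ((Φ p t₀ t).1, (Φ p t₀ t).2, t₀ + t)
          + f (t₀ + t) * Real.sin (Φ p t₀ t).1) (Set.Ici 0) t)
    (hv0 : ∀ t : ℝ, |v (0, 0, t)| < 1) (t₀ : ℝ) :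
    ∃ δ > (0:ℝ), (∀ τ ∈ Set.Icc (0:ℝ) δ, (Φ ((0:ℝ), (0:ℝ)) t₀ τ).1 ≤ 0) ∧
      (Φ ((0:ℝ), (0:ℝ)) t₀ δ).1 < 0 := by
  have hx0 : Φ ((0:ℝ), (0:ℝ)) t₀ 0 = ((0:ℝ), (0:ℝ)) := hΦ0 _ _
  set c : ℝ := v (0, 0, t₀) - 1 with hc
  have hcneg : c < 0 := by
    have := (abs_lt.mp (hv0 t₀)).2
    simp [hc]; linarith
  have hd2 : HasDerivWithinAt (fun s => (Φ ((0:ℝ), (0:ℝ)) t₀ s).2) c (Set.Ici 0) 0 := by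
    have h := hode2 ((0:ℝ), (0:ℝ)) t₀ 0 le_rfl
    simp only [hx0] at h
    have key : u (0, 0, t₀ + 0) * Real.sin (0:ℝ) - Real.cos 0
        + v (0, 0, t₀ + 0) + f (t₀ + 0) * Real.sin (0:ℝ) = c := by
      simp [hc]; ring
    rwa [key] at h
  -- slope of second coordinate
  have hslope : Filter.Tendsto (slope (fun τ => (Φ ((0:ℝ),(0:ℝ)) t₀ τ).2) 0)
      (𝓝[>] 0) (𝓝 c) := by
    have := hasDerivWithinAt_iff_tendsto_slope.mp hd2
    rwa [Set.Ici_sdiff_left] at this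
  have hev : ∀ᶠ τ in 𝓝[>] (0:ℝ), slope (fun τ => (Φ ((0:ℝ),(0:ℝ)) t₀ τ).2) 0 τ < c / 2 :=
    hslope.eventually_lt_const (by linarith)
  obtain ⟨δ, hδpos, hδ⟩ := mem_nhdsGT_iff_exists_Ioc_subset.mp hev
  rw [Set.mem_Ioi] at hδpos
  have hx2neg : ∀ τ ∈ Set.Ioc (0:ℝ) δ, (Φ ((0:ℝ),(0:ℝ)) t₀ τ).2 < 0 := by
    intro τ hτ
    have h := hδ hτ
    simp only [Set.mem_setOf_eq] at h
    rw [slope_def_field] at h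
    have h2 : ((Φ ((0:ℝ),(0:ℝ)) t₀ τ).2 - (Φ ((0:ℝ),(0:ℝ)) t₀ 0).2) / (τ - 0) < c / 2 := h
    rw [hx0, sub_zero, sub_zero] at h2
    have := (div_lt_iff₀ hτ.1).mp h2
    nlinarith [hτ.1]
  have hx1cont : ContinuousOn (fun τ => (Φ ((0:ℝ),(0:ℝ)) t₀ τ).1) (Set.Ici 0) :=
    fun τ hτ => (hode1 _ _ τ hτ).continuousWithinAt
  have hanti : StrictAntiOn (fun τ => (Φ ((0:ℝ),(0:ℝ)) t₀ τ).1) (Set.Icc 0 δ) := by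
    apply strictAntiOn_of_deriv_neg (convex_Icc 0 δ)
      (hx1cont.mono Set.Icc_subset_Ici_self)
    intro τ hτ
    rw [interior_Icc] at hτ
    have hda : HasDerivAt (fun τ => (Φ ((0:ℝ),(0:ℝ)) t₀ τ).1) ((Φ ((0:ℝ),(0:ℝ)) t₀ τ).2) τ :=
      (hode1 _ _ τ hτ.1.le).hasDerivAt (Ici_mem_nhds hτ.1)
    rw [hda.deriv]
    exact hx2neg τ ⟨hτ.1, hτ.2.le⟩
  have h0mem : (0:ℝ) ∈ Set.Icc (0:ℝ) δ := ⟨le_rfl, hδpos.le⟩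
  have hle : ∀ τ ∈ Set.Icc (0:ℝ) δ, (Φ ((0:ℝ),(0:ℝ)) t₀ τ).1 ≤ 0 := by
    intro τ hτ
    rcases eq_or_lt_of_le hτ.1 with h | h
    · rw [← h, hx0]
    · have h2 := hanti h0mem hτ h
      simp only [hx0] at h2
      exact h2.le
  refine ⟨δ, hδpos, hle, ?_⟩
  have h2 := hanti h0mem ⟨hδpos.le, le_rfl⟩ hδpos
  simp only [hx0] at h2
  exact h2

lemma pendulum_rise_pi
    (u v : ℝ × ℝ × ℝ → ℝ) (f : ℝ → ℝ) (Φ : ℝ × ℝ → ℝ → ℝ → ℝ × ℝ)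
    (hΦ0 : ∀ p t₀, Φ p t₀ 0 = p)
    (hode1 : ∀ (p : ℝ × ℝ) (t₀ : ℝ), ∀ t ≥ (0 : ℝ),
      HasDerivWithinAt (fun s => (Φ p t₀ s).1) ((Φ p t₀ t).2) (Set.Ici 0) t)
    (hode2 : ∀ (p : ℝ × ℝ) (t₀ : ℝ), ∀ t ≥ (0 : ℝ),
      HasDerivWithinAt (fun s => (Φ p t₀ s).2)
        (u ((Φ p t₀ t).1, (Φ p t₀ t).2, t₀ + t) * Real.sin (Φ p t₀ t).1
          - Real.cos (Φ p t₀ t).1 + v ((Φ p t₀ t).1, (Φ p t₀ t).2, t₀ + t)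
          + f (t₀ + t) * Real.sin (Φ p t₀ t).1) (Set.Ici 0) t)
    (hvπ : ∀ t : ℝ, |v (Real.pi, 0, t)| < 1) (t₀ : ℝ) :
    ∃ δ > (0:ℝ), (∀ τ ∈ Set.Icc (0:ℝ) δ, Real.pi ≤ (Φ (Real.pi, (0:ℝ)) t₀ τ).1) ∧
      Real.pi < (Φ (Real.pi, (0:ℝ)) t₀ δ).1 := by
  have hx0 : Φ (Real.pi, (0:ℝ)) t₀ 0 = (Real.pi, (0:ℝ)) := hΦ0 _ _
  set c : ℝ := v (Real.pi, 0, t₀) + 1 with hc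
  have hcpos : 0 < c := by
    have := (abs_lt.mp (hvπ t₀)).1
    simp [hc]; linarith
  have hd2 : HasDerivWithinAt (fun s => (Φ (Real.pi, (0:ℝ)) t₀ s).2) c (Set.Ici 0) 0 := by
    have h := hode2 (Real.pi, (0:ℝ)) t₀ 0 le_rfl
    simp only [hx0] at h
    have : u (Real.pi, 0, t₀ + 0) * Real.sin Real.pi - Real.cos Real.pi
        + v (Real.pi, 0, t₀ + 0) + f (t₀ + 0) * Real.sin Real.pi = c := by
      simp [Real.sin_pi, Real.cos_pi, hc]; ring
    rwa [this] at h
  have hslope : Filter.Tendsto (slope (fun τ => (Φ (Real.pi,(0:ℝ)) t₀ τ).2) 0)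
      (𝓝[>] 0) (𝓝 c) := by
    have := hasDerivWithinAt_iff_tendsto_slope.mp hd2
    rwa [Set.Ici_sdiff_left] at this
  have hev : ∀ᶠ τ in 𝓝[>] (0:ℝ), c / 2 < slope (fun τ => (Φ (Real.pi,(0:ℝ)) t₀ τ).2) 0 τ :=
    hslope.eventually_const_lt (by linarith)
  obtain ⟨δ, hδpos, hδ⟩ := mem_nhdsGT_iff_exists_Ioc_subset.mp hev
  rw [Set.mem_Ioi] at hδpos
  have hx2pos : ∀ τ ∈ Set.Ioc (0:ℝ) δ, 0 < (Φ (Real.pi,(0:ℝ)) t₀ τ).2 := by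
    intro τ hτ
    have h := hδ hτ
    simp only [Set.mem_setOf_eq] at h
    rw [slope_def_field] at h
    have h2 : c / 2 < ((Φ (Real.pi,(0:ℝ)) t₀ τ).2 - (Φ (Real.pi,(0:ℝ)) t₀ 0).2) / (τ - 0) := h
    rw [hx0, sub_zero, sub_zero] at h2
    have := (lt_div_iff₀ hτ.1).mp h2
    nlinarith [hτ.1]
  have hx1cont : ContinuousOn (fun τ => (Φ (Real.pi,(0:ℝ)) t₀ τ).1) (Set.Ici 0) :=
    fun τ hτ => (hode1 _ _ τ hτ).continuousWithinAt
  have hmono : StrictMonoOn (fun τ => (Φ (Real.pi,(0:ℝ)) t₀ τ).1) (Set.Icc 0 δ) := by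
    apply strictMonoOn_of_deriv_pos (convex_Icc 0 δ)
      (hx1cont.mono Set.Icc_subset_Ici_self)
    intro τ hτ
    rw [interior_Icc] at hτ
    have hda : HasDerivAt (fun τ => (Φ (Real.pi,(0:ℝ)) t₀ τ).1) ((Φ (Real.pi,(0:ℝ)) t₀ τ).2) τ :=
      (hode1 _ _ τ hτ.1.le).hasDerivAt (Ici_mem_nhds hτ.1)
    rw [hda.deriv]
    exact hx2pos τ ⟨hτ.1, hτ.2.le⟩
  have h0mem : (0:ℝ) ∈ Set.Icc (0:ℝ) δ := ⟨le_rfl, hδpos.le⟩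
  have hge : ∀ τ ∈ Set.Icc (0:ℝ) δ, Real.pi ≤ (Φ (Real.pi,(0:ℝ)) t₀ τ).1 := by
    intro τ hτ
    rcases eq_or_lt_of_le hτ.1 with h | h
    · rw [← h, hx0]
    · have h2 := hmono h0mem hτ h
      simp only [hx0] at h2
      exact h2.le
  refine ⟨δ, hδpos, hge, ?_⟩
  have h2 := hmono h0mem ⟨hδpos.le, le_rfl⟩ hδpos
  simp only [hx0] at h2
  exact h2

end PendulumAux



/-- The non-autonomous controlled inverted pendulum
`φ̈ = u(φ, φ̇, t)·sin φ - cos φ + v(φ, φ̇, t) + f(t)·sin φ` with smooth `u, v, f`,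
generating a continuous semi-process `Φ` on `ℝ²` in the coordinates `(φ, φ̇)`.
If `|v(0,0,t)| < 1` and `|v(π,0,t)| < 1` for all `t`, and `(π/2, 0)` is a uniformly
Lyapunov stable equilibrium, then `(π/2, 0)` is not globally attractive: some
solution satisfies `0 < φ(t) < π` for all `t ≥ 0` and does not converge to
`(π/2, 0)`. -/
theorem nonautonomous_pendulum_not_globally_attractive
    (u v : ℝ × ℝ × ℝ → ℝ) (f : ℝ → ℝ)
    (hu : ContDiff ℝ (⊤ : ℕ∞) u) (hv : ContDiff ℝ (⊤ : ℕ∞) v)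
    (hf : ContDiff ℝ (⊤ : ℕ∞) f)
    (Φ : ℝ × ℝ → ℝ → ℝ → ℝ × ℝ)
    (hΦcont : ContinuousOn (fun q : (ℝ × ℝ) × ℝ × ℝ => Φ q.1 q.2.1 q.2.2) {q | 0 ≤ q.2.2})
    (hΦ0 : ∀ p t₀, Φ p t₀ 0 = p)
    (hΦadd : ∀ (p : ℝ × ℝ) (t₀ t s : ℝ), 0 ≤ t → 0 ≤ s →
      Φ p t₀ (t + s) = Φ (Φ p t₀ t) (t₀ + t) s)
    (hode1 : ∀ (p : ℝ × ℝ) (t₀ : ℝ), ∀ t ≥ (0 : ℝ),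
      HasDerivWithinAt (fun s => (Φ p t₀ s).1) ((Φ p t₀ t).2) (Set.Ici 0) t)
    (hode2 : ∀ (p : ℝ × ℝ) (t₀ : ℝ), ∀ t ≥ (0 : ℝ),
      HasDerivWithinAt (fun s => (Φ p t₀ s).2)
        (u ((Φ p t₀ t).1, (Φ p t₀ t).2, t₀ + t) * Real.sin (Φ p t₀ t).1
          - Real.cos (Φ p t₀ t).1 + v ((Φ p t₀ t).1, (Φ p t₀ t).2, t₀ + t)
          + f (t₀ + t) * Real.sin (Φ p t₀ t).1) (Set.Ici 0) t)
    (hv0 : ∀ t : ℝ, |v (0, 0, t)| < 1) (hvπ : ∀ t : ℝ, |v (Real.pi, 0, t)| < 1)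
    (hequil : ∀ t₀ ≥ (0 : ℝ), ∀ t ≥ (0 : ℝ), Φ (Real.pi / 2, 0) t₀ t = (Real.pi / 2, 0))
    (hstab : ∀ O : Set (ℝ × ℝ), IsOpen O → (Real.pi / 2, (0 : ℝ)) ∈ O →
      ∃ V : Set (ℝ × ℝ), IsOpen V ∧ (Real.pi / 2, (0 : ℝ)) ∈ V ∧
        ∀ p ∈ V, ∀ t₀ ≥ (0 : ℝ), ∀ t ≥ (0 : ℝ), Φ p t₀ t ∈ O) :
    ∃ p : ℝ × ℝ, (∀ t ≥ (0 : ℝ), 0 < (Φ p 0 t).1 ∧ (Φ p 0 t).1 < Real.pi) ∧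
      ¬ Filter.Tendsto (fun t => Φ p 0 t) Filter.atTop (nhds (Real.pi / 2, (0 : ℝ))) := by
  have fall_zero : ∀ t₀ : ℝ, ∃ δ > (0:ℝ),
      (∀ τ ∈ Set.Icc (0:ℝ) δ, (Φ ((0:ℝ), (0:ℝ)) t₀ τ).1 ≤ 0) ∧
      (Φ ((0:ℝ), (0:ℝ)) t₀ δ).1 < 0 :=
    fun t₀ => pendulum_fall_zero u v f Φ hΦ0 hode1 hode2 hv0 t₀
  have rise_pi : ∀ t₀ : ℝ, ∃ δ > (0:ℝ),
      (∀ τ ∈ Set.Icc (0:ℝ) δ, Real.pi ≤ (Φ (Real.pi, (0:ℝ)) t₀ τ).1) ∧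
      Real.pi < (Φ (Real.pi, (0:ℝ)) t₀ δ).1 :=
    fun t₀ => pendulum_rise_pi u v f Φ hΦ0 hode1 hode2 hvπ t₀
  by_contra hcon
  push_neg at hcon
  -- extended flow, continuous on all of ℝ²
  have hGcont : Continuous (fun q : ℝ × ℝ => Φ (q.1, 0) 0 (max q.2 0)) := by
    have he : Continuous (fun q : ℝ × ℝ => (((q.1, (0:ℝ)), ((0:ℝ), max q.2 0)) : (ℝ × ℝ) × ℝ × ℝ)) := by
      fun_prop
    exact hΦcont.comp_continuous he (fun q => show (0:ℝ) ≤ max q.2 0 from le_max_right _ _)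
  set F1 : ℝ × ℝ → ℝ := fun q => (Φ (q.1, 0) 0 (max q.2 0)).1 with hF1def
  have hF1 : Continuous F1 := continuous_fst.comp hGcont
  have hF1eq : ∀ s t : ℝ, 0 ≤ t → F1 (s, t) = (Φ (s, 0) 0 t).1 := by
    intro s t ht
    simp only [hF1def, max_eq_left ht]
  -- the exit sets
  set A : Set ℝ := {s | ∃ t ≥ (0:ℝ), (Φ (s, 0) 0 t).1 < 0 ∧
    ∀ r ∈ Set.Icc 0 t, (Φ (s, 0) 0 r).1 < Real.pi} with hAdef
  set B : Set ℝ := {s | ∃ t ≥ (0:ℝ), Real.pi < (Φ (s, 0) 0 t).1 ∧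
    ∀ r ∈ Set.Icc 0 t, 0 < (Φ (s, 0) 0 r).1} with hBdef
  have hAopen : IsOpen A := by
    rw [isOpen_iff_forall_mem_open]
    rintro s₀ ⟨t, ht0, h1, h2⟩
    have hO1 : IsOpen {s : ℝ | F1 (s, t) < 0} :=
      isOpen_Iio.preimage (hF1.comp (by fun_prop))
    have hO2 := open_forall_lt F1 hF1 t Real.pi
    refine ⟨_, ?_, hO1.inter hO2, ?_, ?_⟩
    · rintro s ⟨hs1, hs2⟩
      refine ⟨t, ht0, by rw [← hF1eq s t ht0]; exact hs1, fun r hr => ?_⟩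
      rw [← hF1eq s r hr.1]; exact hs2 r hr
    · rwa [Set.mem_setOf_eq, hF1eq s₀ t ht0]
    · intro r hr; rw [hF1eq s₀ r hr.1]; exact h2 r hr
  have hBopen : IsOpen B := by
    rw [isOpen_iff_forall_mem_open]
    rintro s₀ ⟨t, ht0, h1, h2⟩
    have hO1 : IsOpen {s : ℝ | Real.pi < F1 (s, t)} :=
      isOpen_Ioi.preimage (hF1.comp (by fun_prop))
    have hO2 := open_forall_gt F1 hF1 t 0
    refine ⟨_, ?_, hO1.inter hO2, ?_, ?_⟩
    · rintro s ⟨hs1, hs2⟩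
      refine ⟨t, ht0, by rw [← hF1eq s t ht0]; exact hs1, fun r hr => ?_⟩
      rw [← hF1eq s r hr.1]; exact hs2 r hr
    · rwa [Set.mem_setOf_eq, hF1eq s₀ t ht0]
    · intro r hr; rw [hF1eq s₀ r hr.1]; exact h2 r hr
  have hA0 : (0:ℝ) ∈ A := by
    obtain ⟨δ, hδpos, hδle, hδlt⟩ := fall_zero 0
    exact ⟨δ, hδpos.le, hδlt, fun r hr => lt_of_le_of_lt (hδle r hr) Real.pi_pos⟩
  have hBπ : Real.pi ∈ B := by
    obtain ⟨δ, hδpos, hδge, hδgt⟩ := rise_pi 0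
    exact ⟨δ, hδpos.le, hδgt, fun r hr => lt_of_lt_of_le Real.pi_pos (hδge r hr)⟩
  have hdisj : ∀ s, s ∈ A → s ∈ B → False := by
    rintro s ⟨t₁, ht₁, hA1, hA2⟩ ⟨t₂, ht₂, hB1, hB2⟩
    rcases le_total t₁ t₂ with h | h
    · exact absurd (hB2 t₁ ⟨ht₁, h⟩) (not_lt.mpr hA1.le)
    · exact absurd (hA2 t₂ ⟨ht₂, h⟩) (not_lt.mpr hB1.le)
  -- confinement of non-exiting solutions
  have hC : ∀ s ∈ Set.Icc (0:ℝ) Real.pi, s ∉ A → s ∉ B →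
      ∀ t ≥ (0:ℝ), 0 < (Φ (s, 0) 0 t).1 ∧ (Φ (s, 0) 0 t).1 < Real.pi := by
    intro s hs hsA hsB
    have hs0lt : 0 < s := lt_of_le_of_ne hs.1 (fun h => hsA (h ▸ hA0))
    have hsπlt : s < Real.pi := lt_of_le_of_ne hs.2 (fun h => hsB (h ▸ hBπ))
    have hφ0 : Φ (s, 0) 0 0 = (s, 0) := hΦ0 _ _
    by_contra hcc
    push_neg at hcc
    set S : Set ℝ := {t | 0 ≤ t ∧ (F1 (s, t) ≤ 0 ∨ Real.pi ≤ F1 (s, t))} with hSdef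
    have hSne : S.Nonempty := by
      obtain ⟨t, ht0, hpt⟩ := hcc
      refine ⟨t, ht0, ?_⟩
      rw [hF1eq s t ht0]
      by_cases h : 0 < (Φ (s, 0) 0 t).1
      · exact Or.inr (hpt h)
      · exact Or.inl (not_lt.mp h)
    have hScl : IsClosed S := by
      have hc : Continuous (fun t : ℝ => F1 (s, t)) := hF1.comp (by fun_prop)
      exact isClosed_Ici.inter ((isClosed_Iic.preimage hc).union (isClosed_Ici.preimage hc))
    have hbdd : BddBelow S := ⟨0, fun x hx => hx.1⟩
    set T : ℝ := sInf S with hTdef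
    have hTS : T ∈ S := hScl.csInf_mem hSne hbdd
    have hT0 : 0 ≤ T := hTS.1
    have hFs0 : F1 (s, 0) = s := by rw [hF1eq s 0 le_rfl, hφ0]
    have hTpos : 0 < T := by
      rcases hT0.lt_or_eq with h | h
      · exact h
      · exfalso
        rcases hTS.2 with h2 | h2
        · rw [← h, hFs0] at h2
          exact absurd h2 (not_le.mpr hs0lt)
        · rw [← h, hFs0] at h2
          exact absurd h2 (not_le.mpr hsπlt)
    have hpre : ∀ r, 0 ≤ r → r < T → 0 < F1 (s, r) ∧ F1 (s, r) < Real.pi := by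
      intro r h0 hr
      by_contra hcr
      push_neg at hcr
      have hrS : r ∈ S := by
        refine ⟨h0, ?_⟩
        by_cases h : 0 < F1 (s, r)
        · exact Or.inr (hcr h)
        · exact Or.inl (not_lt.mp h)
      exact absurd (csInf_le hbdd hrS) (not_le.mpr hr)
    have hpreΦ : ∀ r, 0 ≤ r → r < T → 0 < (Φ (s, 0) 0 r).1 ∧ (Φ (s, 0) 0 r).1 < Real.pi := by
      intro r h0 hr
      have := hpre r h0 hr
      rwa [hF1eq s r h0] at this
    -- the exit value is exactly 0 or π
    have hcT : ContinuousAt (fun t : ℝ => F1 (s, t)) T := (hF1.comp (by fun_prop)).continuousAt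
    have htendl : Filter.Tendsto (fun t : ℝ => F1 (s, t)) (𝓝[<] T) (𝓝 (F1 (s, T))) :=
      hcT.continuousWithinAt.tendsto
    have hevl : ∀ᶠ r in 𝓝[<] T, 0 < F1 (s, r) ∧ F1 (s, r) < Real.pi := by
      have h1 : ∀ᶠ r in 𝓝[<] T, 0 < r := nhdsWithin_le_nhds (Ioi_mem_nhds hTpos)
      have h2 : ∀ᶠ r in 𝓝[<] T, r < T := self_mem_nhdsWithin
      filter_upwards [h1, h2] with r hr1 hr2 using hpre r hr1.le hr2
    have hge0 : 0 ≤ F1 (s, T) := ge_of_tendsto htendl (hevl.mono fun r h => h.1.le)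
    have hleπ : F1 (s, T) ≤ Real.pi := le_of_tendsto htendl (hevl.mono fun r h => h.2.le)
    have hφT : (Φ (s, 0) 0 T).1 = F1 (s, T) := (hF1eq s T hT0).symm
    have hda : HasDerivAt (fun t => (Φ (s, 0) 0 t).1) ((Φ (s, 0) 0 T).2) T :=
      (hode1 _ _ T hT0).hasDerivAt (Ici_mem_nhds hTpos)
    rcases hTS.2 with hcase | hcase
    · -- exit through 0
      have hT1 : (Φ (s, 0) 0 T).1 = 0 := by rw [hφT]; exact le_antisymm hcase hge0
      rcases lt_trichotomy ((Φ (s, 0) 0 T).2) 0 with hq | hq | hq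
      · -- negative velocity: exits strictly after T
        apply hsA
        have hsl : Filter.Tendsto (slope (fun t => (Φ (s, 0) 0 t).1) T) (𝓝[>] T)
            (𝓝 ((Φ (s, 0) 0 T).2)) := by
          have h := hasDerivWithinAt_iff_tendsto_slope.mp (hda.hasDerivWithinAt (s := Set.Ioi T))
          have hdiff : Set.Ioi T \ {T} = Set.Ioi T :=
            Set.diff_singleton_eq_self (by simp)
          rwa [hdiff] at h
        have hev1 : ∀ᶠ r in 𝓝[>] T, slope (fun t => (Φ (s, 0) 0 t).1) T r < 0 :=
          hsl.eventually_lt_const hq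
        have hev2 : ∀ᶠ r in 𝓝[>] T, (Φ (s, 0) 0 r).1 < Real.pi := by
          have := (hda.continuousAt.tendsto).mono_left (nhdsWithin_le_nhds (s := Set.Ioi T))
          rw [hT1] at this
          exact this.eventually_lt_const Real.pi_pos
        obtain ⟨δ', hδ'T, hδ'⟩ := mem_nhdsGT_iff_exists_Ioc_subset.mp (hev1.and hev2)
        rw [Set.mem_Ioi] at hδ'T
        have hmem : δ' ∈ Set.Ioc T δ' := ⟨hδ'T, le_rfl⟩
        have hsl' := (hδ' hmem).1
        rw [slope_def_field, hT1, sub_zero] at hsl'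
        have hnum : (Φ (s, 0) 0 δ').1 < 0 := by
          have hd : 0 < δ' - T := by linarith
          have := (div_lt_iff₀ hd).mp hsl'
          linarith
        refine ⟨δ', by linarith, hnum, fun r hr => ?_⟩
        rcases lt_trichotomy r T with h | h | h
        · exact (hpreΦ r hr.1 h).2
        · rw [h, hT1]; exact Real.pi_pos
        · exact (hδ' ⟨h, hr.2⟩).2
      · -- zero velocity: the fall lemma applies
        apply hsA
        have hqq : Φ (s, 0) 0 T = ((0:ℝ), (0:ℝ)) := Prod.ext hT1 hq
        obtain ⟨δ, hδpos, hδle, hδlt⟩ := fall_zero (0 + T)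
        have hadd : ∀ τ : ℝ, 0 ≤ τ → Φ (s, 0) 0 (T + τ) = Φ ((0:ℝ), (0:ℝ)) (0 + T) τ := by
          intro τ hτ
          rw [hΦadd (s, 0) 0 T τ hT0 hτ, hqq]
        refine ⟨T + δ, by linarith, ?_, fun r hr => ?_⟩
        · rw [hadd δ hδpos.le]; exact hδlt
        · rcases lt_trichotomy r T with h | h | h
          · exact (hpreΦ r hr.1 h).2
          · rw [h, hT1]; exact Real.pi_pos
          · have hr' : r = T + (r - T) := by ring
            rw [hr', hadd (r - T) (by linarith)]
            exact lt_of_le_of_lt (hδle (r - T) ⟨by linarith, by linarith [hr.2]⟩) Real.pi_pos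
      · -- positive velocity: was negative just before T, contradiction
        have hsl : Filter.Tendsto (slope (fun t => (Φ (s, 0) 0 t).1) T) (𝓝[<] T)
            (𝓝 ((Φ (s, 0) 0 T).2)) := by
          have h := hasDerivWithinAt_iff_tendsto_slope.mp (hda.hasDerivWithinAt (s := Set.Iio T))
          have hdiff : Set.Iio T \ {T} = Set.Iio T :=
            Set.diff_singleton_eq_self (by simp)
          rwa [hdiff] at h
        have hev1 : ∀ᶠ r in 𝓝[<] T, 0 < slope (fun t => (Φ (s, 0) 0 t).1) T r :=
          hsl.eventually_const_lt hq
        have hev2 : ∀ᶠ r in 𝓝[<] T, 0 < r := nhdsWithin_le_nhds (Ioi_mem_nhds hTpos)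
        have hev3 : ∀ᶠ r in 𝓝[<] T, r < T := self_mem_nhdsWithin
        obtain ⟨r, hr1, hr2, hr3⟩ := (hev1.and (hev2.and hev3)).exists
        rw [slope_def_field, hT1, sub_zero] at hr1
        have hd : r - T < 0 := by linarith
        have hnum : (Φ (s, 0) 0 r).1 < 0 := by
          rcases div_pos_iff.mp hr1 with ⟨_, h2⟩ | ⟨h1, _⟩
          · linarith
          · exact h1
        exact absurd (hpreΦ r hr2.le hr3).1 (not_lt.mpr hnum.le)
    · -- exit through π
      have hT1 : (Φ (s, 0) 0 T).1 = Real.pi := by rw [hφT]; exact le_antisymm hleπ hcase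
      rcases lt_trichotomy ((Φ (s, 0) 0 T).2) 0 with hq | hq | hq
      · -- negative velocity: was above π just before T, contradiction
        have hsl : Filter.Tendsto (slope (fun t => (Φ (s, 0) 0 t).1) T) (𝓝[<] T)
            (𝓝 ((Φ (s, 0) 0 T).2)) := by
          have h := hasDerivWithinAt_iff_tendsto_slope.mp (hda.hasDerivWithinAt (s := Set.Iio T))
          have hdiff : Set.Iio T \ {T} = Set.Iio T :=
            Set.diff_singleton_eq_self (by simp)
          rwa [hdiff] at h
        have hev1 : ∀ᶠ r in 𝓝[<] T, slope (fun t => (Φ (s, 0) 0 t).1) T r < 0 :=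
          hsl.eventually_lt_const hq
        have hev2 : ∀ᶠ r in 𝓝[<] T, 0 < r := nhdsWithin_le_nhds (Ioi_mem_nhds hTpos)
        have hev3 : ∀ᶠ r in 𝓝[<] T, r < T := self_mem_nhdsWithin
        obtain ⟨r, hr1, hr2, hr3⟩ := (hev1.and (hev2.and hev3)).exists
        rw [slope_def_field, hT1] at hr1
        have hd : r - T < 0 := by linarith
        have hnum : Real.pi < (Φ (s, 0) 0 r).1 := by
          rcases div_neg_iff.mp hr1 with ⟨h1, h2⟩ | ⟨_, h2⟩
          · linarith
          · linarith
        exact absurd (hpreΦ r hr2.le hr3).2 (not_lt.mpr hnum.le)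
      · -- zero velocity: the rise lemma applies
        apply hsB
        have hqq : Φ (s, 0) 0 T = (Real.pi, (0:ℝ)) := Prod.ext hT1 hq
        obtain ⟨δ, hδpos, hδge, hδgt⟩ := rise_pi (0 + T)
        have hadd : ∀ τ : ℝ, 0 ≤ τ → Φ (s, 0) 0 (T + τ) = Φ (Real.pi, (0:ℝ)) (0 + T) τ := by
          intro τ hτ
          rw [hΦadd (s, 0) 0 T τ hT0 hτ, hqq]
        refine ⟨T + δ, by linarith, ?_, fun r hr => ?_⟩
        · rw [hadd δ hδpos.le]; exact hδgt
        · rcases lt_trichotomy r T with h | h | h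
          · exact (hpreΦ r hr.1 h).1
          · rw [h, hT1]; exact Real.pi_pos
          · have hr' : r = T + (r - T) := by ring
            rw [hr', hadd (r - T) (by linarith)]
            exact lt_of_lt_of_le Real.pi_pos (hδge (r - T) ⟨by linarith, by linarith [hr.2]⟩)
      · -- positive velocity: exits strictly after T
        apply hsB
        have hsl : Filter.Tendsto (slope (fun t => (Φ (s, 0) 0 t).1) T) (𝓝[>] T)
            (𝓝 ((Φ (s, 0) 0 T).2)) := by
          have h := hasDerivWithinAt_iff_tendsto_slope.mp (hda.hasDerivWithinAt (s := Set.Ioi T))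
          have hdiff : Set.Ioi T \ {T} = Set.Ioi T :=
            Set.diff_singleton_eq_self (by simp)
          rwa [hdiff] at h
        have hev1 : ∀ᶠ r in 𝓝[>] T, 0 < slope (fun t => (Φ (s, 0) 0 t).1) T r :=
          hsl.eventually_const_lt hq
        have hev2 : ∀ᶠ r in 𝓝[>] T, 0 < (Φ (s, 0) 0 r).1 := by
          have := (hda.continuousAt.tendsto).mono_left (nhdsWithin_le_nhds (s := Set.Ioi T))
          rw [hT1] at this
          exact this.eventually_const_lt Real.pi_pos
        obtain ⟨δ', hδ'T, hδ'⟩ := mem_nhdsGT_iff_exists_Ioc_subset.mp (hev1.and hev2)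
        rw [Set.mem_Ioi] at hδ'T
        have hmem : δ' ∈ Set.Ioc T δ' := ⟨hδ'T, le_rfl⟩
        have hsl' := (hδ' hmem).1
        rw [slope_def_field, hT1] at hsl'
        have hnum : Real.pi < (Φ (s, 0) 0 δ').1 := by
          have hd : 0 < δ' - T := by linarith
          have := (div_pos_iff.mp hsl')
          rcases this with ⟨h1, _⟩ | ⟨_, h2⟩
          · linarith
          · linarith
        refine ⟨δ', by linarith, hnum, fun r hr => ?_⟩
        rcases lt_trichotomy r T with h | h | h
        · exact (hpreΦ r hr.1 h).1
        · rw [h, hT1]; exact Real.pi_pos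
        · exact (hδ' ⟨h, hr.2⟩).2
  -- stability neighborhood for the strip
  obtain ⟨V, hVopen, hVmem, hVprop⟩ := hstab (Set.Ioo 0 Real.pi ×ˢ (Set.univ : Set ℝ))
    (isOpen_Ioo.prod isOpen_univ)
    ⟨⟨by positivity, by linarith [Real.pi_pos]⟩, Set.mem_univ _⟩
  -- the confined set is open thanks to the (assumed) convergence of all confined solutions
  set W : Set ℝ := {s | ∀ t ≥ (0:ℝ), 0 < (Φ (s, 0) 0 t).1 ∧ (Φ (s, 0) 0 t).1 < Real.pi}
    with hWdef
  have hWopen : IsOpen W := by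
    rw [isOpen_iff_forall_mem_open]
    intro s hsW
    have htend := hcon (s, 0) hsW
    obtain ⟨T, hTV, hT0⟩ :=
      ((htend.eventually_mem (hVopen.mem_nhds hVmem)).and (Filter.eventually_ge_atTop 0)).exists
    have hgT : Continuous (fun s' : ℝ => Φ (s', 0) 0 (max T 0)) :=
      hGcont.comp (by fun_prop : Continuous (fun s' : ℝ => (s', T)))
    have hO1 : IsOpen {s' : ℝ | Φ (s', 0) 0 (max T 0) ∈ V} := hVopen.preimage hgT
    have hO2 := open_forall_lt F1 hF1 T Real.pi
    have hO3 := open_forall_gt F1 hF1 T 0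
    refine ⟨_, ?_, (hO1.inter (hO2.inter hO3)), ?_, ?_, ?_⟩
    · rintro s' ⟨hs1, hs2, hs3⟩
      intro t ht
      rcases le_or_gt t T with h | h
      · rw [← hF1eq s' t ht]
        exact ⟨hs3 t ⟨ht, h⟩, hs2 t ⟨ht, h⟩⟩
      · have hV' : Φ (s', 0) 0 T ∈ V := by rwa [Set.mem_setOf_eq, max_eq_left hT0] at hs1
        have heq : Φ (s', 0) 0 t = Φ (Φ (s', 0) 0 T) (0 + T) (t - T) := by
          have h1 := hΦadd (s', 0) 0 T (t - T) hT0 (by linarith)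
          rw [show T + (t - T) = t by ring] at h1
          exact h1
        have := hVprop _ hV' (0 + T) (by linarith) (t - T) (by linarith)
        rw [← heq] at this
        exact ⟨this.1.1, this.1.2⟩
    · rwa [Set.mem_setOf_eq, max_eq_left hT0]
    · intro r hr; rw [hF1eq s r hr.1]; exact (hsW r hr.1).2
    · intro r hr; rw [hF1eq s r hr.1]; exact (hsW r hr.1).1
  have hWB : ∀ s ∈ W, s ∉ B := by
    rintro s hsW ⟨t, ht0, h1, _⟩
    exact absurd (hsW t ht0).2 (not_lt.mpr h1.le)
  have hWA : ∀ s ∈ W, s ∉ A := by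
    rintro s hsW ⟨t, ht0, h1, _⟩
    exact absurd (hsW t ht0).1 (not_lt.mpr h1.le)
  have hcover : Set.Icc (0:ℝ) Real.pi ⊆ (A ∪ W) ∪ B := by
    intro s hs
    by_cases hA' : s ∈ A
    · exact Or.inl (Or.inl hA')
    by_cases hB' : s ∈ B
    · exact Or.inr hB'
    · exact Or.inl (Or.inr (hC s hs hA' hB'))
  have hpc := isPreconnected_Icc (a := (0:ℝ)) (b := Real.pi) (A ∪ W) B
    (hAopen.union hWopen) hBopen hcover
    ⟨0, ⟨le_rfl, Real.pi_pos.le⟩, Or.inl hA0⟩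
    ⟨Real.pi, ⟨Real.pi_pos.le, le_rfl⟩, hBπ⟩
  obtain ⟨x, _, hxAB⟩ := hpc
  rcases hxAB.1 with h | h
  · exact hdisj x h hxAB.2
  · exact hWB x h hxAB.2
end

section
/- Consider the Furuta pendulum system [I + m(L + l²·sin²φ)]·ψ̈ + mlL·cos φ·φ̈ + (1/2)ml²·φ̇·sin 2φ·ψ̇ + [−mlL·sin φ + (1/2)ml²·sin 2φ·ψ̇]·φ̇ = u(φ, φ̇, ψ, ψ̇) and mlL·cos φ·ψ̈ + ml²·φ̈ − (1/2)ml²·sin 2φ·ψ̇·φ̇ − mgl·sin φ = 0, with positive constants I, L, l, m, g and u : ℝ⁴ → ℝ. Assume the solutions define a continuous semi-flow on ℝ⁴ and u is smooth in a neighborhood of the sets {φ = π/2} and {φ = −π/2}. If (φ, φ̇, ψ, ψ̇) = (0, 0, ψ₀, 0) is a Lyapunov stable equilibrium, then it is not globally attractive: there exists a solution with −π/2 < φ(t) < π/2 for all t ≥ 0 that does not converge to the equilibrium. -/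
open Set Filter Topology
private lemma furuta_aux_escape (φ φd : ℝ → ℝ) (t₀ c : ℝ) (ht₀ : 0 ≤ t₀) (hc : 0 < c)
    (hφ : ∀ t, 0 ≤ t → HasDerivWithinAt φ (φd t) (Set.Ici 0) t)
    (hφd : HasDerivWithinAt φd c (Set.Ici 0) t₀)
    (h0 : 0 ≤ φd t₀) :
    ∃ u, t₀ < u ∧ ∀ τ, t₀ < τ → τ ≤ u → φ t₀ < φ τ := by
  have hslope : Tendsto (slope φd t₀) (𝓝[>] t₀) (𝓝 c) :=
    (hasDerivWithinAt_iff_tendsto_slope.mp hφd).mono_left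
      (nhdsWithin_mono _ (fun x hx => ⟨le_trans ht₀ (le_of_lt hx), ne_of_gt hx⟩))
  have hev : ∀ᶠ τ in 𝓝[>] t₀, c / 2 < slope φd t₀ τ :=
    hslope.eventually (eventually_gt_nhds (by linarith))
  obtain ⟨u, hu, hsub⟩ := mem_nhdsGT_iff_exists_Ioc_subset.mp hev
  have hpos : ∀ τ ∈ Set.Ioc t₀ u, 0 < φd τ := by
    intro τ hτ
    have h1 := hsub hτ
    simp only [Set.mem_setOf_eq, slope_def_field] at h1
    have h3 : 0 < τ - t₀ := sub_pos.mpr hτ.1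
    have h4 := (lt_div_iff₀ h3).mp h1
    nlinarith [mul_pos (half_pos hc) h3]
  refine ⟨u, hu, fun τ hτ1 hτ2 => ?_⟩
  have hIcc : Set.Icc t₀ τ ⊆ Set.Ici 0 := fun y hy => le_trans ht₀ hy.1
  have hcont : ContinuousOn φ (Set.Icc t₀ τ) := fun x hx =>
    ((hφ x (le_trans ht₀ hx.1)).continuousWithinAt).mono hIcc
  have hderiv : ∀ x ∈ Set.Ioo t₀ τ, HasDerivAt φ (φd x) x := fun x hx =>
    (hφ x (le_of_lt (lt_of_le_of_lt ht₀ hx.1))).hasDerivAt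
      (Ici_mem_nhds (lt_of_le_of_lt ht₀ hx.1))
  obtain ⟨c', hc', heq⟩ := exists_hasDerivAt_eq_slope φ φd hτ1 hcont hderiv
  have hp : 0 < φd c' := hpos c' ⟨hc'.1, le_trans (le_of_lt hc'.2) hτ2⟩
  rw [heq] at hp
  have h3 : 0 < τ - t₀ := sub_pos.mpr hτ1
  rcases div_pos_iff.mp hp with ⟨hnum, _⟩ | ⟨_, hden⟩
  · linarith
  · linarith

private lemma furuta_aux_left (φ : ℝ → ℝ) (d t₀ : ℝ) (ht₀ : 0 < t₀)
    (h : HasDerivWithinAt φ d (Set.Ici 0) t₀)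
    (hmax : ∀ τ, 0 ≤ τ → τ < t₀ → φ τ ≤ φ t₀) : 0 ≤ d := by
  have hslope : Tendsto (slope φ t₀) (𝓝[Set.Ico 0 t₀] t₀) (𝓝 d) :=
    (hasDerivWithinAt_iff_tendsto_slope.mp h).mono_left
      (nhdsWithin_mono _ fun x hx => ⟨hx.1, ne_of_lt hx.2⟩)
  have hne : (𝓝[Set.Ico 0 t₀] t₀).NeBot := by
    apply mem_closure_iff_nhdsWithin_neBot.mp
    rw [closure_Ico (ne_of_gt ht₀).symm]
    exact ⟨le_of_lt ht₀, le_refl _⟩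
  refine ge_of_tendsto hslope ?_
  filter_upwards [self_mem_nhdsWithin] with τ hτ
  have h1 : φ τ - φ t₀ ≤ 0 := sub_nonpos.mpr (hmax τ hτ.1 hτ.2)
  have h2 : τ - t₀ < 0 := sub_neg.mpr hτ.2
  rw [slope_def_field]
  exact div_nonneg_iff.mpr (Or.inr ⟨h1, le_of_lt h2⟩)

private lemma furuta_aux_open (F : ℝ × ℝ × ℝ × ℝ → ℝ → ℝ × ℝ × ℝ × ℝ)
    (hFcont : ContinuousOn (fun q : (ℝ × ℝ × ℝ × ℝ) × ℝ => F q.1 q.2) {q | 0 ≤ q.2})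
    (U W : Set (ℝ × ℝ × ℝ × ℝ)) (hU : IsOpen U) (hW : IsOpen W) :
    IsOpen {p | ∃ t, 0 ≤ t ∧ F p t ∈ U ∧ ∀ τ ∈ Set.Icc 0 t, F p τ ∈ W} := by
  rw [isOpen_iff_forall_mem_open]
  rintro p ⟨t, ht0, htU, htW⟩
  obtain ⟨uW, huWopen, huW⟩ := (continuousOn_iff'.mp hFcont) W hW
  obtain ⟨uU, huUopen, huU⟩ := (continuousOn_iff'.mp hFcont) U hU
  have hsub : ({p} : Set (ℝ × ℝ × ℝ × ℝ)) ×ˢ Set.Icc 0 t ⊆ uW := by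
    rintro ⟨p', τ⟩ ⟨hp', hτ⟩
    simp only [mem_singleton_iff] at hp'
    rw [hp']
    have hmem : ((p, τ) : (ℝ × ℝ × ℝ × ℝ) × ℝ) ∈
        (fun q : (ℝ × ℝ × ℝ × ℝ) × ℝ => F q.1 q.2) ⁻¹' W ∩ {q | 0 ≤ q.2} := ⟨htW τ hτ, hτ.1⟩
    rw [huW] at hmem
    exact hmem.1
  obtain ⟨n1, n2, hn1, hn2, hpn1, hIccn2, hn12⟩ :=
    generalized_tube_lemma isCompact_singleton isCompact_Icc huWopen hsub
  have hpU : ((p, t) : (ℝ × ℝ × ℝ × ℝ) × ℝ) ∈ uU := by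
    have hmem : ((p, t) : (ℝ × ℝ × ℝ × ℝ) × ℝ) ∈
        (fun q : (ℝ × ℝ × ℝ × ℝ) × ℝ => F q.1 q.2) ⁻¹' U ∩ {q | 0 ≤ q.2} := ⟨htU, ht0⟩
    rw [huU] at hmem
    exact hmem.1
  refine ⟨n1 ∩ {p' | ((p', t) : (ℝ × ℝ × ℝ × ℝ) × ℝ) ∈ uU}, ?_, ?_, ?_⟩
  · intro p' hp'
    refine ⟨t, ht0, ?_, ?_⟩
    · have hmem : ((p', t) : (ℝ × ℝ × ℝ × ℝ) × ℝ) ∈ uU ∩ {q | 0 ≤ q.2} := ⟨hp'.2, ht0⟩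
      rw [← huU] at hmem
      exact hmem.1
    · intro τ hτ
      have h12 : ((p', τ) : (ℝ × ℝ × ℝ × ℝ) × ℝ) ∈ uW := hn12 ⟨hp'.1, hIccn2 hτ⟩
      have hmem : ((p', τ) : (ℝ × ℝ × ℝ × ℝ) × ℝ) ∈ uW ∩ {q | 0 ≤ q.2} := ⟨h12, hτ.1⟩
      rw [← huW] at hmem
      exact hmem.1
  · exact hn1.inter (huUopen.preimage (continuous_id.prodMk continuous_const))
  · exact ⟨hpn1 rfl, hpU⟩



/-- The Furuta pendulum (an inverted pendulum on a rotating base) with state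
`(φ, φ̇, ψ, ψ̇) ∈ ℝ⁴`, governed by
`[I + m(L + l²·sin²φ)]·ψ̈ + mlL·cos φ·φ̈ + ½ml²·φ̇·sin 2φ·ψ̇ + [−mlL·sin φ + ½ml²·sin 2φ·ψ̇]·φ̇ = u`
and `mlL·cos φ·ψ̈ + ml²·φ̈ − ½ml²·sin 2φ·ψ̇·φ̇ − mgl·sin φ = 0`, whose solutions
define a continuous semi-flow `F` on `ℝ⁴`, with a control `u` smooth in a
neighborhood of the sets `{φ = π/2}` and `{φ = −π/2}`. If `(0, 0, ψ₀, 0)` is a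
Lyapunov stable equilibrium, then it is not globally attractive: some solution
satisfies `−π/2 < φ(t) < π/2` for all `t ≥ 0` and does not converge to the
equilibrium. -/
theorem furuta_pendulum_not_globally_attractive
    (I L l m g : ℝ) (hI : 0 < I) (hL : 0 < L) (hl : 0 < l) (hm : 0 < m) (hg : 0 < g)
    (u : ℝ × ℝ × ℝ × ℝ → ℝ)
    (hu : ∃ O : Set (ℝ × ℝ × ℝ × ℝ), IsOpen O ∧
      {q : ℝ × ℝ × ℝ × ℝ | q.1 = Real.pi / 2 ∨ q.1 = -(Real.pi / 2)} ⊆ O ∧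
      ContDiffOn ℝ (⊤ : ℕ∞) u O)
    (F : ℝ × ℝ × ℝ × ℝ → ℝ → ℝ × ℝ × ℝ × ℝ)
    (hFcont : ContinuousOn (fun q : (ℝ × ℝ × ℝ × ℝ) × ℝ => F q.1 q.2) {q | 0 ≤ q.2})
    (hF0 : ∀ p, F p 0 = p)
    (hFadd : ∀ (p : ℝ × ℝ × ℝ × ℝ) (t s : ℝ), 0 ≤ t → 0 ≤ s →
      F p (t + s) = F (F p t) s)
    (hode : ∀ (p : ℝ × ℝ × ℝ × ℝ), ∀ t ≥ (0 : ℝ),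
      HasDerivWithinAt (fun s => (F p s).1) ((F p t).2.1) (Set.Ici 0) t ∧
      HasDerivWithinAt (fun s => (F p s).2.2.1) ((F p t).2.2.2) (Set.Ici 0) t ∧
      ∃ φdd ψdd : ℝ,
        HasDerivWithinAt (fun s => (F p s).2.1) φdd (Set.Ici 0) t ∧
        HasDerivWithinAt (fun s => (F p s).2.2.2) ψdd (Set.Ici 0) t ∧
        (I + m * (L + l ^ 2 * Real.sin ((F p t).1) ^ 2)) * ψdd
          + m * l * L * Real.cos ((F p t).1) * φdd
          + (1 / 2) * m * l ^ 2 * (F p t).2.1 * Real.sin (2 * (F p t).1) * (F p t).2.2.2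
          + (-(m * l * L * Real.sin ((F p t).1))
              + (1 / 2) * m * l ^ 2 * Real.sin (2 * (F p t).1) * (F p t).2.2.2)
            * (F p t).2.1
          = u (F p t) ∧
        m * l * L * Real.cos ((F p t).1) * ψdd + m * l ^ 2 * φdd
          - (1 / 2) * m * l ^ 2 * Real.sin (2 * (F p t).1) * (F p t).2.2.2 * (F p t).2.1
          - m * g * l * Real.sin ((F p t).1) = 0)
    (ψ₀ : ℝ)
    (hequil : ∀ t ≥ (0 : ℝ), F (0, 0, ψ₀, 0) t = (0, 0, ψ₀, 0))
    (hstab : ∀ O : Set (ℝ × ℝ × ℝ × ℝ), IsOpen O → ((0 : ℝ), (0 : ℝ), ψ₀, (0 : ℝ)) ∈ O →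
      ∃ V : Set (ℝ × ℝ × ℝ × ℝ), IsOpen V ∧ ((0 : ℝ), (0 : ℝ), ψ₀, (0 : ℝ)) ∈ V ∧
        ∀ p ∈ V, ∀ t ≥ (0 : ℝ), F p t ∈ O) :
    ∃ p : ℝ × ℝ × ℝ × ℝ,
      (∀ t ≥ (0 : ℝ), -(Real.pi / 2) < (F p t).1 ∧ (F p t).1 < Real.pi / 2) ∧
      ¬ Filter.Tendsto (fun t => F p t) Filter.atTop
        (nhds ((0 : ℝ), (0 : ℝ), ψ₀, (0 : ℝ))) := by
  by_contra hcon
  push_neg at hcon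
  have hπ : (0:ℝ) < Real.pi / 2 := div_pos Real.pi_pos two_pos
  -- the open strip
  have hstripopen : IsOpen {q : ℝ × ℝ × ℝ × ℝ | -(Real.pi/2) < q.1 ∧ q.1 < Real.pi/2} :=
    (isOpen_lt continuous_const continuous_fst).inter (isOpen_lt continuous_fst continuous_const)
  have he_strip : ((0:ℝ), (0:ℝ), ψ₀, (0:ℝ)) ∈
      {q : ℝ × ℝ × ℝ × ℝ | -(Real.pi/2) < q.1 ∧ q.1 < Real.pi/2} := ⟨by simpa using hπ, hπ⟩
  obtain ⟨V, hVopen, hVe, hV⟩ := hstab _ hstripopen he_strip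
  -- the three sets of initial conditions
  set strip : Set (ℝ × ℝ × ℝ × ℝ) := {q | -(Real.pi/2) < q.1 ∧ q.1 < Real.pi/2} with hstripdef
  set SA : Set (ℝ × ℝ × ℝ × ℝ) :=
    {p | ∃ t, 0 ≤ t ∧ F p t ∈ V ∧ ∀ τ ∈ Set.Icc 0 t, F p τ ∈ strip} with hSAdef
  set SBp : Set (ℝ × ℝ × ℝ × ℝ) :=
    {p | ∃ t, 0 ≤ t ∧ F p t ∈ {q : ℝ × ℝ × ℝ × ℝ | Real.pi/2 < q.1} ∧
      ∀ τ ∈ Set.Icc 0 t, F p τ ∈ {q : ℝ × ℝ × ℝ × ℝ | -(Real.pi/2) < q.1}} with hSBpdef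
  set SBm : Set (ℝ × ℝ × ℝ × ℝ) :=
    {p | ∃ t, 0 ≤ t ∧ F p t ∈ {q : ℝ × ℝ × ℝ × ℝ | q.1 < -(Real.pi/2)} ∧
      ∀ τ ∈ Set.Icc 0 t, F p τ ∈ {q : ℝ × ℝ × ℝ × ℝ | q.1 < Real.pi/2}} with hSBmdef
  have hSAopen : IsOpen SA := furuta_aux_open F hFcont V strip hVopen hstripopen
  have hSBpopen : IsOpen SBp := furuta_aux_open F hFcont _ _
    (isOpen_lt continuous_const continuous_fst) (isOpen_lt continuous_const continuous_fst)
  have hSBmopen : IsOpen SBm := furuta_aux_open F hFcont _ _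
    (isOpen_lt continuous_fst continuous_const) (isOpen_lt continuous_fst continuous_const)
  -- trajectories from SA stay in the strip forever
  have hSAstay : ∀ p ∈ SA, ∀ t, 0 ≤ t → F p t ∈ strip := by
    rintro p ⟨tV, htV0, htVV, htVW⟩ t ht
    rcases le_or_gt t tV with hle | hlt
    · exact htVW t ⟨ht, hle⟩
    · have heq : t = tV + (t - tV) := by ring
      rw [heq, hFadd p tV (t - tV) htV0 (by linarith)]
      exact hV _ htVV _ (by linarith)
  -- escape lemma at the boundary
  have hesc : ∀ p : ℝ × ℝ × ℝ × ℝ, ∀ t₀, 0 ≤ t₀ → ∀ ε : ℝ, (ε = 1 ∨ ε = -1) →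
      (F p t₀).1 = ε * (Real.pi/2) → 0 ≤ ε * (F p t₀).2.1 →
      ∃ w, t₀ < w ∧ ∀ τ, t₀ < τ → τ ≤ w → Real.pi/2 < ε * (F p τ).1 := by
    intro p t₀ ht₀ ε hε hb hvel
    obtain ⟨hd1, hd2, φdd, ψdd, hdφd, hdψd, heq1, heq2⟩ := hode p t₀ ht₀
    have hcos : Real.cos ((F p t₀).1) = 0 := by
      rw [hb]; rcases hε with rfl | rfl
      · norm_num [Real.cos_pi_div_two]
      · rw [show (-1 : ℝ) * (Real.pi/2) = -(Real.pi/2) by ring, Real.cos_neg,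
          Real.cos_pi_div_two]
    have hsin2 : Real.sin (2 * (F p t₀).1) = 0 := by
      rw [hb]; rcases hε with rfl | rfl
      · rw [show (2:ℝ) * (1 * (Real.pi/2)) = Real.pi by ring, Real.sin_pi]
      · rw [show (2:ℝ) * (-1 * (Real.pi/2)) = -Real.pi by ring, Real.sin_neg, Real.sin_pi,
          neg_zero]
    have hsin : Real.sin ((F p t₀).1) = ε := by
      rw [hb]; rcases hε with rfl | rfl
      · norm_num [Real.sin_pi_div_two]
      · rw [show (-1 : ℝ) * (Real.pi/2) = -(Real.pi/2) by ring, Real.sin_neg,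
          Real.sin_pi_div_two]
    rw [hcos, hsin2, hsin] at heq2
    have hkey : m * l ^ 2 * φdd = m * g * l * ε := by linear_combination heq2
    have hεsq : ε * ε = 1 := by rcases hε with rfl | rfl <;> norm_num
    have hpos : 0 < ε * φdd := by
      have h1 : m * l ^ 2 * (ε * φdd) = m * g * l := by linear_combination ε * hkey + m * g * l * hεsq
      nlinarith [mul_pos hm (mul_pos hl hl), mul_pos (mul_pos hm hg) hl]
    obtain ⟨w, hw, hgt⟩ := furuta_aux_escape (fun t => ε * (F p t).1)
      (fun t => ε * (F p t).2.1) t₀ (ε * φdd) ht₀ hpos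
      (fun t ht => ((hode p t ht).1).const_mul ε) (hdφd.const_mul ε) hvel
    refine ⟨w, hw, fun τ h1 h2 => ?_⟩
    have := hgt τ h1 h2
    have hb' : ε * (F p t₀).1 = Real.pi/2 := by linear_combination ε * hb + (Real.pi/2) * hεsq
    linarith
  -- the cover claim
  set γ : ℝ → ℝ × ℝ × ℝ × ℝ := fun s => (s, 0, ψ₀, 0) with hγdef
  have hγcont : Continuous γ := by
    apply Continuous.prodMk continuous_id
    exact Continuous.prodMk continuous_const (Continuous.prodMk continuous_const continuous_const)
  have cover : ∀ s : ℝ, s ∈ Set.Icc (-(Real.pi/2)) (Real.pi/2) →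
      γ s ∈ SA ∪ (SBp ∪ SBm) := by
    intro s hs
    set p := γ s with hp
    by_cases hstay : ∀ t, 0 ≤ t → F p t ∈ strip
    · left
      have htd := hcon p (fun t ht => hstay t ht)
      have hev : ∀ᶠ t in atTop, F p t ∈ V := htd.eventually (hVopen.mem_nhds hVe)
      obtain ⟨T, hT⟩ := eventually_atTop.mp hev
      exact ⟨max T 0, le_max_right _ _, hT _ (le_max_left _ _), fun τ hτ => hstay τ hτ.1⟩
    · right
      push_neg at hstay
      obtain ⟨t1, ht1, hnot⟩ := hstay
      have hΦcont : ContinuousOn (fun t => (F p t).1) (Set.Ici 0) := fun x hx =>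
        ((hode p x hx).1.continuousWithinAt)
      set E : Set ℝ :=
        {t | 0 ≤ t ∧ ((F p t).1 ≤ -(Real.pi/2) ∨ Real.pi/2 ≤ (F p t).1)} with hEdef
      have hEne : E.Nonempty := by
        refine ⟨t1, ht1, ?_⟩
        simp only [hstripdef, Set.mem_setOf_eq, not_and_or, not_lt] at hnot
        exact hnot
      have hEbdd : BddBelow E := ⟨0, fun x hx => hx.1⟩
      have hEclosed : IsClosed E := by
        have hEeq : E = Set.Ici 0 ∩ (fun t => (F p t).1) ⁻¹'
            (Set.Iic (-(Real.pi/2)) ∪ Set.Ici (Real.pi/2)) := by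
          ext t
          simp [hEdef, Set.mem_Iic, Set.mem_Ici, and_comm]
        rw [hEeq]
        exact ContinuousOn.preimage_isClosed_of_isClosed hΦcont isClosed_Ici
          (isClosed_Iic.union isClosed_Ici)
      set t₀ := sInf E with ht₀def
      have ht₀E : t₀ ∈ E := hEclosed.csInf_mem hEne hEbdd
      have ht₀0 : 0 ≤ t₀ := ht₀E.1
      have hmin : ∀ τ, 0 ≤ τ → τ < t₀ →
          -(Real.pi/2) < (F p τ).1 ∧ (F p τ).1 < Real.pi/2 := by
        intro τ h1 h2
        have hnE : τ ∉ E := fun hτE => absurd (csInf_le hEbdd hτE) (not_le.mpr h2)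
        simp only [hEdef, Set.mem_setOf_eq, not_and_or, not_or, not_le] at hnE
        rcases hnE with h | h
        · exact absurd h1 (not_le.mpr h)
        · exact h
      have hΦ0 : (F p 0).1 = s := by rw [hF0]
      have hbd : (F p t₀).1 = -(Real.pi/2) ∨ (F p t₀).1 = Real.pi/2 := by
        have hmem : (F p t₀).1 ∈ Set.Icc (-(Real.pi/2)) (Real.pi/2) := by
          rcases eq_or_lt_of_le ht₀0 with h0 | h0
          · rw [← h0, hΦ0]; exact hs
          · have hlim : Tendsto (fun t => (F p t).1) (𝓝[Set.Ico 0 t₀] t₀)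
                (𝓝 ((F p t₀).1)) :=
              (hΦcont t₀ ht₀0).mono (fun x hx => hx.1)
            have hne : (𝓝[Set.Ico 0 t₀] t₀).NeBot := by
              apply mem_closure_iff_nhdsWithin_neBot.mp
              rw [closure_Ico (ne_of_lt h0)]
              exact ⟨ht₀0, le_refl _⟩
            refine isClosed_Icc.mem_of_tendsto hlim ?_
            filter_upwards [self_mem_nhdsWithin] with τ hτ
            exact ⟨le_of_lt (hmin τ hτ.1 hτ.2).1, le_of_lt (hmin τ hτ.1 hτ.2).2⟩
        rcases ht₀E.2 with h | h
        · left; exact le_antisymm h hmem.1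
        · right; exact le_antisymm hmem.2 h
      have hvel : ∀ ε : ℝ, (ε = 1 ∨ ε = -1) → (F p t₀).1 = ε * (Real.pi/2) →
          0 ≤ ε * (F p t₀).2.1 := by
        intro ε hε hb
        rcases eq_or_lt_of_le ht₀0 with h0 | h0
        · have hv0 : (F p 0).2.1 = 0 := by rw [hF0]
          rw [← h0, hv0, mul_zero]
        · refine furuta_aux_left (fun t => ε * (F p t).1) _ t₀ h0
            (((hode p t₀ ht₀0).1).const_mul ε) ?_
          intro τ h1 h2
          have hm' := hmin τ h1 h2
          have hb' : ε * (F p t₀).1 = Real.pi/2 := by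
            rw [hb]; rcases hε with rfl | rfl <;> norm_num
          show ε * (F p τ).1 ≤ ε * (F p t₀).1
          rw [hb']
          rcases hε with rfl | rfl
          · simpa using le_of_lt hm'.2
          · have : -(F p τ).1 ≤ Real.pi/2 := by linarith [hm'.1]
            simpa using this
      rcases hbd with hb | hb
      · -- exits through the bottom: SBm
        right
        have hb2 : (F p t₀).1 = (-1) * (Real.pi/2) := by rw [hb]; ring
        obtain ⟨w, hw, hgt⟩ := hesc p t₀ ht₀0 (-1) (Or.inr rfl) hb2
          (hvel (-1) (Or.inr rfl) hb2)
        refine ⟨w, by linarith, ?_, ?_⟩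
        · have := hgt w hw (le_refl _)
          simp only [Set.mem_setOf_eq]
          linarith
        · intro τ hτ
          simp only [Set.mem_setOf_eq]
          rcases lt_trichotomy τ t₀ with h | h | h
          · exact (hmin τ hτ.1 h).2
          · rw [h, hb]; linarith
          · have := hgt τ h hτ.2; linarith
      · -- exits through the top: SBp
        left
        have hb2 : (F p t₀).1 = (1:ℝ) * (Real.pi/2) := by rw [hb]; ring
        obtain ⟨w, hw, hgt⟩ := hesc p t₀ ht₀0 1 (Or.inl rfl) hb2
          (hvel 1 (Or.inl rfl) hb2)
        refine ⟨w, by linarith, ?_, ?_⟩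
        · have := hgt w hw (le_refl _)
          simp only [Set.mem_setOf_eq]
          linarith
        · intro τ hτ
          simp only [Set.mem_setOf_eq]
          rcases lt_trichotomy τ t₀ with h | h | h
          · exact (hmin τ hτ.1 h).1
          · rw [h, hb]; linarith
          · have := hgt τ h hτ.2; linarith
  -- disjointness facts
  have hSA_notB : ∀ p ∈ SA, p ∉ SBp ∧ p ∉ SBm := by
    intro p hp
    have hstay := hSAstay p hp
    constructor
    · rintro ⟨t, ht0, htop, -⟩
      exact absurd (hstay t ht0).2 (not_lt.mpr (le_of_lt htop))
    · rintro ⟨t, ht0, hbot, -⟩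
      exact absurd (hstay t ht0).1 (not_lt.mpr (le_of_lt hbot))
  have hSBpm : ∀ p, p ∈ SBp → p ∈ SBm → False := by
    rintro p ⟨t1, ht1, h1top, h1in⟩ ⟨t2, ht2, h2bot, h2in⟩
    rcases le_total t1 t2 with h | h
    · have := h2in t1 ⟨ht1, h⟩
      simp only [Set.mem_setOf_eq] at this h1top
      linarith
    · have := h1in t2 ⟨ht2, h⟩
      simp only [Set.mem_setOf_eq] at this h2bot
      linarith
  -- endpoints
  have hmemtop : (Real.pi/2) ∈ Set.Icc (-(Real.pi/2)) (Real.pi/2) :=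
    ⟨by linarith, le_refl _⟩
  have hmembot : (-(Real.pi/2)) ∈ Set.Icc (-(Real.pi/2)) (Real.pi/2) :=
    ⟨le_refl _, by linarith⟩
  have htop : γ (Real.pi/2) ∈ SBp := by
    rcases cover (Real.pi/2) hmemtop with h | h | h
    · exfalso
      have := (hSAstay _ h 0 le_rfl).2
      rw [hF0] at this
      simp only [hγdef] at this
      linarith
    · exact h
    · exfalso
      obtain ⟨t, ht0, -, hin⟩ := h
      have := hin 0 ⟨le_rfl, ht0⟩
      rw [hF0] at this
      simp only [hγdef, Set.mem_setOf_eq] at this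
      linarith
  have hbot : γ (-(Real.pi/2)) ∈ SBm := by
    rcases cover (-(Real.pi/2)) hmembot with h | h | h
    · exfalso
      have := (hSAstay _ h 0 le_rfl).1
      rw [hF0] at this
      simp only [hγdef] at this
      linarith
    · exfalso
      obtain ⟨t, ht0, -, hin⟩ := h
      have := hin 0 ⟨le_rfl, ht0⟩
      rw [hF0] at this
      simp only [hγdef, Set.mem_setOf_eq] at this
      linarith
    · exact h
  -- connectedness contradiction
  obtain ⟨x, hxI, hx1, hx2⟩ := isPreconnected_Icc (a := -(Real.pi/2)) (b := Real.pi/2)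
    (γ ⁻¹' SBp) (γ ⁻¹' (SA ∪ SBm))
    (hSBpopen.preimage hγcont) ((hSAopen.union hSBmopen).preimage hγcont)
    (fun s hsI => by
      rcases cover s hsI with h | h | h
      · exact Or.inr (Or.inl h)
      · exact Or.inl h
      · exact Or.inr (Or.inr h))
    ⟨Real.pi/2, hmemtop, htop⟩
    ⟨-(Real.pi/2), hmembot, Or.inr hbot⟩
  rcases hx2 with h | h
  · exact (hSA_notB _ h).1 hx1
  · exact hSBpm _ hx1 h
end

section
/- Consider the wheeled inverted pendulum equation (a₁₁a₂₂ − a₁₂²·cos φ)·φ̈ + a₁₂²·φ̇²·sin φ·cos φ − a₁₁·mgl·sin φ = (a₁₁ + a₁₂·cos φ)·u(φ, φ̇, t), where a₁₁ = (2M + m)r², a₁₂ = mrl, a₂₂ = ml² with positive constants m, M, r, l, g, and u : ℝ³ → ℝ is smooth in a neighborhood of the planes φ = π/2 and φ = −π/2. Assume the solutions define a continuous semi-process on ℝ² and that |u(φ, φ̇, t)| < mgl for all t at the points (φ, φ̇) = (π/2, 0) and (φ, φ̇) = (−π/2, 0). If the vertical upward position (φ, φ̇) = (0, 0) is a uniformly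 Lyapunov stable equilibrium, then it is not globally attractive: there exists a solution with −π/2 < φ(t) < π/2 for all t ≥ 0 that does not converge to (0, 0). -/
open Set Filter Topology

lemma aux_forward {f : ℝ → ℝ} {τ v : ℝ} (hτ : 0 ≤ τ)
    (hf : HasDerivWithinAt f v (Set.Ici 0) τ) (hv : 0 < v) :
    ∃ s, 0 ≤ s ∧ f τ < f s := by
  rw [hasDerivWithinAt_iff_tendsto_slope] at hf
  have h1 : ∀ᶠ s in 𝓝[Set.Ioi τ] τ, 0 < slope f τ s :=
    (hf.eventually (eventually_gt_nhds hv)).filter_mono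
      (nhdsWithin_mono τ (show Set.Ioi τ ⊆ Set.Ici 0 \ {τ} from fun s hs => ⟨hτ.trans hs.le, hs.ne'⟩))
  obtain ⟨s, hs1, hs2⟩ := (h1.and self_mem_nhdsWithin).exists
  refine ⟨s, hτ.trans hs2.le, ?_⟩
  have h3 := mul_pos hs1 (sub_pos.2 (hs2 : τ < s))
  rw [slope_def_field, div_mul_cancel₀ _ (sub_ne_zero.2 (hs2 : τ < s).ne')] at h3
  linarith

lemma aux_backward {f : ℝ → ℝ} {τ v : ℝ} (hτ : 0 < τ)
    (hf : HasDerivWithinAt f v (Set.Ici 0) τ) (hv : v < 0) :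
    ∃ s, 0 ≤ s ∧ f τ < f s := by
  rw [hasDerivWithinAt_iff_tendsto_slope] at hf
  have hmem : Set.Ici (0:ℝ) ∈ 𝓝[Set.Iio τ] τ :=
    nhdsWithin_le_nhds (Ici_mem_nhds hτ)
  have heq : 𝓝[Set.Ici (0:ℝ) ∩ Set.Iio τ] τ = 𝓝[Set.Iio τ] τ := nhdsWithin_inter_of_mem hmem
  have h1 : ∀ᶠ s in 𝓝[Set.Ici (0:ℝ) ∩ Set.Iio τ] τ, slope f τ s < 0 :=
    (hf.eventually (eventually_lt_nhds hv)).filter_mono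
      (nhdsWithin_mono τ (show Set.Ici (0:ℝ) ∩ Set.Iio τ ⊆ Set.Ici 0 \ {τ} from fun s hs => ⟨hs.1, hs.2.ne⟩))
  have : (𝓝[Set.Ici (0:ℝ) ∩ Set.Iio τ] τ).NeBot := by rw [heq]; infer_instance
  obtain ⟨s, hs1, hs2⟩ := (h1.and self_mem_nhdsWithin).exists
  refine ⟨s, hs2.1, ?_⟩
  have h3 := mul_pos_of_neg_of_neg hs1 (sub_neg.2 (hs2.2 : s < τ))
  rw [slope_def_field, div_mul_cancel₀ _ (sub_ne_zero.2 (hs2.2 : s < τ).ne)] at h3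
  linarith

lemma aux_second {f g : ℝ → ℝ} {τ c : ℝ} (hτ : 0 ≤ τ)
    (hfg : ∀ t, 0 ≤ t → HasDerivWithinAt f (g t) (Set.Ici 0) t)
    (hg : HasDerivWithinAt g c (Set.Ici 0) τ) (hgτ : g τ = 0) (hc : 0 < c) :
    ∃ s, 0 ≤ s ∧ f τ < f s := by
  rw [hasDerivWithinAt_iff_tendsto_slope] at hg
  have h1 : ∀ᶠ s in 𝓝[Set.Ioi τ] τ, 0 < slope g τ s :=
    (hg.eventually (eventually_gt_nhds hc)).filter_mono
      (nhdsWithin_mono τ (show Set.Ioi τ ⊆ Set.Ici 0 \ {τ} from fun s hs => ⟨hτ.trans hs.le, hs.ne'⟩))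
  have h2 : ∀ᶠ s in 𝓝[Set.Ioi τ] τ, 0 < g s := by
    filter_upwards [h1, self_mem_nhdsWithin] with s hs1 hs2
    have h3 := mul_pos hs1 (sub_pos.2 (hs2 : τ < s))
    rw [slope_def_field, div_mul_cancel₀ _ (sub_ne_zero.2 (hs2 : τ < s).ne')] at h3
    linarith [hgτ]
  obtain ⟨b, hb, hIoo⟩ := mem_nhdsGT_iff_exists_Ioo_subset.mp h2
  have hb' : τ < b := hb
  set μ := (τ + b) / 2 with hμ
  have hτμ : τ < μ := by rw [hμ]; linarith [hb']
  have hμb : μ < b := by rw [hμ]; linarith [hb']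
  have hsub : Set.Icc τ μ ⊆ Set.Ici (0:ℝ) := fun x hx => hτ.trans hx.1
  have hmono : StrictMonoOn f (Set.Icc τ μ) := by
    apply strictMonoOn_of_hasDerivWithinAt_pos (convex_Icc _ _)
      (fun x hx => ((hfg x (hτ.trans hx.1)).continuousWithinAt).mono hsub)
    · intro x hx
      rw [interior_Icc] at hx
      have hsub2 : interior (Set.Icc τ μ) ⊆ Set.Ici (0:ℝ) := by
        rw [interior_Icc]; exact Set.Ioo_subset_Icc_self.trans hsub
      exact (hfg x (hτ.trans hx.1.le)).mono hsub2
    · intro x hx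
      rw [interior_Icc] at hx
      exact hIoo ⟨hx.1, hx.2.trans hμb⟩
  exact ⟨μ, hτ.trans hτμ.le, hmono ⟨le_refl τ, hτμ.le⟩ ⟨hτμ.le, le_refl μ⟩ hτμ⟩

set_option maxHeartbeats 1000000 in
/-- The wheeled inverted pendulum
`(a₁₁a₂₂ − a₁₂²·cos φ)·φ̈ + a₁₂²·φ̇²·sin φ·cos φ − a₁₁·mgl·sin φ = (a₁₁ + a₁₂·cos φ)·u(φ, φ̇, t)`
with `a₁₁ = (2M + m)r²`, `a₁₂ = mrl`, `a₂₂ = ml²`, whose solutions define a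
continuous semi-process `Φ` on `ℝ²` in the coordinates `(φ, φ̇)`, the control `u`
being smooth near the planes `φ = ±π/2` and satisfying `|u| < mgl` at
`(φ, φ̇) = (±π/2, 0)` for all `t`. If the upward position `(0, 0)` is a uniformly
Lyapunov stable equilibrium, then it is not globally attractive: some solution
satisfies `−π/2 < φ(t) < π/2` for all `t ≥ 0` and does not converge to `(0, 0)`. -/
theorem wheeled_pendulum_not_globally_attractive
    (m M r l g : ℝ) (hm : 0 < m) (hM : 0 < M) (hr : 0 < r) (hl : 0 < l) (hg : 0 < g)
    (a₁₁ a₁₂ a₂₂ : ℝ)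
    (ha₁₁ : a₁₁ = (2 * M + m) * r ^ 2) (ha₁₂ : a₁₂ = m * r * l) (ha₂₂ : a₂₂ = m * l ^ 2)
    (u : ℝ × ℝ × ℝ → ℝ)
    (hu : ∃ O : Set (ℝ × ℝ × ℝ), IsOpen O ∧
      {q : ℝ × ℝ × ℝ | q.1 = Real.pi / 2 ∨ q.1 = -(Real.pi / 2)} ⊆ O ∧
      ContDiffOn ℝ (⊤ : ℕ∞) u O)
    (hubound : ∀ t : ℝ, |u (Real.pi / 2, 0, t)| < m * g * l ∧
      |u (-(Real.pi / 2), 0, t)| < m * g * l)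
    (Φ : ℝ × ℝ → ℝ → ℝ → ℝ × ℝ)
    (hΦcont : ContinuousOn (fun q : (ℝ × ℝ) × ℝ × ℝ => Φ q.1 q.2.1 q.2.2) {q | 0 ≤ q.2.2})
    (hΦ0 : ∀ p t₀, Φ p t₀ 0 = p)
    (hΦadd : ∀ (p : ℝ × ℝ) (t₀ t s : ℝ), 0 ≤ t → 0 ≤ s →
      Φ p t₀ (t + s) = Φ (Φ p t₀ t) (t₀ + t) s)
    (hode : ∀ (p : ℝ × ℝ) (t₀ : ℝ), ∀ t ≥ (0 : ℝ),
      HasDerivWithinAt (fun s => (Φ p t₀ s).1) ((Φ p t₀ t).2) (Set.Ici 0) t ∧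
      ∃ φdd : ℝ,
        HasDerivWithinAt (fun s => (Φ p t₀ s).2) φdd (Set.Ici 0) t ∧
        (a₁₁ * a₂₂ - a₁₂ ^ 2 * Real.cos ((Φ p t₀ t).1)) * φdd
          + a₁₂ ^ 2 * ((Φ p t₀ t).2) ^ 2 * Real.sin ((Φ p t₀ t).1) * Real.cos ((Φ p t₀ t).1)
          - a₁₁ * (m * g * l) * Real.sin ((Φ p t₀ t).1)
          = (a₁₁ + a₁₂ * Real.cos ((Φ p t₀ t).1)) * u ((Φ p t₀ t).1, (Φ p t₀ t).2, t₀ + t))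
    (hequil : ∀ t₀ ≥ (0 : ℝ), ∀ t ≥ (0 : ℝ), Φ (0, 0) t₀ t = (0, 0))
    (hstab : ∀ O : Set (ℝ × ℝ), IsOpen O → ((0 : ℝ), (0 : ℝ)) ∈ O →
      ∃ V : Set (ℝ × ℝ), IsOpen V ∧ ((0 : ℝ), (0 : ℝ)) ∈ V ∧
        ∀ p ∈ V, ∀ t₀ ≥ (0 : ℝ), ∀ t ≥ (0 : ℝ), Φ p t₀ t ∈ O) :
    ∃ p : ℝ × ℝ, (∀ t ≥ (0 : ℝ), -(Real.pi / 2) < (Φ p 0 t).1 ∧ (Φ p 0 t).1 < Real.pi / 2) ∧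
      ¬ Filter.Tendsto (fun t => Φ p 0 t) Filter.atTop (nhds ((0 : ℝ), (0 : ℝ))) := by
  by_contra hcon
  push_neg at hcon
  have hπ : (0:ℝ) < Real.pi / 2 := by positivity
  have hApos : 0 < a₁₁ := by rw [ha₁₁]; positivity
  have hA22 : 0 < a₂₂ := by rw [ha₂₂]; positivity
  -- the strip
  set S : Set (ℝ × ℝ) := {q | -(Real.pi / 2) < q.1 ∧ q.1 < Real.pi / 2} with hS
  have hSopen : IsOpen S :=
    (isOpen_lt continuous_const continuous_fst).inter (isOpen_lt continuous_fst continuous_const)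
  have hS0 : ((0:ℝ), (0:ℝ)) ∈ S := ⟨by simpa using hπ, hπ⟩
  obtain ⟨V, hVopen, hV0, hVstab⟩ := hstab S hSopen hS0
  -- joint continuity
  have hG : Continuous (fun q : (ℝ × ℝ) × ℝ => Φ q.1 0 (max q.2 0)) := by
    have := hΦcont.comp_continuous
      (f := fun q : (ℝ × ℝ) × ℝ => (q.1, ((0:ℝ), max q.2 0)))
      (continuous_fst.prodMk (continuous_const.prodMk
        ((continuous_snd.max continuous_const))))
      (fun q => show (0:ℝ) ≤ max q.2 0 from le_max_right _ _)
    exact this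
  have hGt : ∀ t : ℝ, Continuous (fun p : ℝ × ℝ => Φ p 0 (max t 0)) := fun t =>
    hG.comp (continuous_id.prodMk continuous_const)
  -- the sets A and B
  set A : Set (ℝ × ℝ) :=
    {p | ∀ t, 0 ≤ t → -(Real.pi / 2) < (Φ p 0 t).1 ∧ (Φ p 0 t).1 < Real.pi / 2} with hA
  set B : Set (ℝ × ℝ) :=
    {p | ∃ t, 0 ≤ t ∧ (Real.pi / 2 < (Φ p 0 t).1 ∨ (Φ p 0 t).1 < -(Real.pi / 2))} with hB
  have hABdisj : ∀ p, p ∈ A → p ∈ B → False := by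
    intro p hpA hpB
    obtain ⟨t, ht, hout⟩ := hpB
    have h2 := hpA t ht
    rcases hout with h | h
    · linarith [h2.2]
    · linarith [h2.1]
  -- B is open
  have hBopen : IsOpen B := by
    have hBeq : B = ⋃ t : ℝ, ((fun p => Φ p 0 (max t 0)) ⁻¹'
        {q : ℝ × ℝ | Real.pi / 2 < q.1 ∨ q.1 < -(Real.pi / 2)}) := by
      ext p
      simp only [hB, Set.mem_setOf_eq, Set.mem_iUnion, Set.mem_preimage]
      constructor
      · rintro ⟨t, ht, h⟩
        exact ⟨t, by rwa [max_eq_left ht]⟩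
      · rintro ⟨t, h⟩
        exact ⟨max t 0, le_max_right _ _, h⟩
    rw [hBeq]
    exact isOpen_iUnion fun t =>
      (((isOpen_lt continuous_const continuous_fst).union
        (isOpen_lt continuous_fst continuous_const)).preimage (hGt t))
  -- A is open
  have hAopen : IsOpen A := by
    rw [isOpen_iff_mem_nhds]
    intro p hp
    have hp' : ∀ t, 0 ≤ t → Φ p 0 t ∈ S := fun t ht => hp t ht
    have htd := hcon p (fun t ht => hp t ht)
    obtain ⟨T, hT0, hTV⟩ : ∃ T, 0 ≤ T ∧ Φ p 0 T ∈ V := by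
      have hev : ∀ᶠ t in Filter.atTop, Φ p 0 t ∈ V := htd (hVopen.mem_nhds hV0)
      obtain ⟨T, hT⟩ := (hev.and (Filter.eventually_ge_atTop 0)).exists
      exact ⟨T, hT.2, hT.1⟩
    have hWopen : IsOpen ((fun q : (ℝ × ℝ) × ℝ => Φ q.1 0 (max q.2 0)) ⁻¹' S) :=
      hSopen.preimage hG
    have hsub : ({p} : Set (ℝ × ℝ)) ×ˢ Set.Icc (0:ℝ) T ⊆
        ((fun q : (ℝ × ℝ) × ℝ => Φ q.1 0 (max q.2 0)) ⁻¹' S) := by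
      rintro ⟨q, s⟩ ⟨hq, hs⟩
      rw [Set.mem_singleton_iff] at hq
      subst hq
      show Φ q 0 (max s 0) ∈ S
      rw [max_eq_left hs.1]
      exact hp' s hs.1
    obtain ⟨U₁, V₁, hU₁, hV₁, hpU₁, hIccV₁, hUV⟩ :=
      generalized_tube_lemma isCompact_singleton isCompact_Icc hWopen hsub
    have hN : U₁ ∩ ((fun q : ℝ × ℝ => Φ q 0 (max T 0)) ⁻¹' V) ∈ nhds p := by
      apply (hU₁.inter (hVopen.preimage (hGt T))).mem_nhds
      refine ⟨hpU₁ rfl, ?_⟩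
      show Φ p 0 (max T 0) ∈ V
      rwa [max_eq_left hT0]
    refine Filter.mem_of_superset hN ?_
    rintro q ⟨hqU, hqV⟩
    intro t ht
    rcases le_or_gt t T with h | h
    · have h2 := hUV (Set.mk_mem_prod hqU (hIccV₁ ⟨ht, h⟩))
      have h3 : Φ q 0 (max t 0) ∈ S := h2
      rwa [max_eq_left ht] at h3
    · have hqTV : Φ q 0 T ∈ V := by
        have h4 : Φ q 0 (max T 0) ∈ V := hqV
        rwa [max_eq_left hT0] at h4
      have h5 : Φ q 0 t = Φ (Φ q 0 T) T (t - T) := by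
        have h6 := hΦadd q 0 T (t - T) hT0 (by linarith)
        rw [zero_add] at h6
        have h7 : T + (t - T) = t := by ring
        rw [h7] at h6
        exact h6
      rw [h5]
      exact hVstab _ hqTV T hT0 (t - T) (by linarith)
  -- egress at the right boundary with zero velocity
  have key_right : ∀ p : ℝ × ℝ, ∀ τ, 0 ≤ τ → (Φ p 0 τ).1 = Real.pi / 2 →
      (Φ p 0 τ).2 = 0 → p ∈ B := by
    intro p τ hτ hφ hv
    obtain ⟨hd1, φdd, hd2, heq⟩ := hode p 0 τ hτ
    rw [hφ, hv, Real.cos_pi_div_two, Real.sin_pi_div_two] at heq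
    have hub := (hubound (0 + τ)).1
    have hub' := (abs_lt.mp hub).1
    have hφdd : 0 < φdd := by nlinarith [mul_pos hApos hA22]
    obtain ⟨s, hs0, hfs⟩ := aux_second hτ (fun t ht => (hode p 0 t ht).1) hd2 hv hφdd
    exact ⟨s, hs0, Or.inl (by rw [← hφ]; exact hfs)⟩
  -- egress at the left boundary with zero velocity
  have key_left : ∀ p : ℝ × ℝ, ∀ τ, 0 ≤ τ → (Φ p 0 τ).1 = -(Real.pi / 2) →
      (Φ p 0 τ).2 = 0 → p ∈ B := by
    intro p τ hτ hφ hv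
    obtain ⟨hd1, φdd, hd2, heq⟩ := hode p 0 τ hτ
    rw [hφ, hv, Real.cos_neg, Real.sin_neg, Real.cos_pi_div_two, Real.sin_pi_div_two] at heq
    have hub := (hubound (0 + τ)).2
    have hub' := (abs_lt.mp hub).2
    have hφdd : φdd < 0 := by nlinarith [mul_pos hApos hA22]
    have hd2' : HasDerivWithinAt (fun s => -(Φ p 0 s).2) (-φdd) (Set.Ici 0) τ := hd2.neg
    have hv' : -(Φ p 0 τ).2 = 0 := by rw [hv, neg_zero]
    obtain ⟨s, hs0, hfs⟩ := aux_second (f := fun s => -(Φ p 0 s).1)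
      (g := fun s => -(Φ p 0 s).2) hτ
      (fun t ht => ((hode p 0 t ht).1).neg) hd2' hv' (by linarith)
    have hfs' : -(Φ p 0 τ).1 < -(Φ p 0 s).1 := hfs
    refine ⟨s, hs0, Or.inr ?_⟩
    rw [← hφ]
    linarith
  -- the segment
  set L : Set (ℝ × ℝ) :=
    (fun x : ℝ => ((x : ℝ), (0 : ℝ))) '' Set.Icc (-(Real.pi / 2)) (Real.pi / 2) with hL
  have hLconn : IsPreconnected L :=
    isPreconnected_Icc.image _ (Continuous.continuousOn (continuous_id.prodMk continuous_const))
  -- coverage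
  have hcover : L ⊆ A ∪ B := by
    rintro _ ⟨x, hx, rfl⟩
    by_cases hxB : (x, (0:ℝ)) ∈ B
    · exact Or.inr hxB
    left
    intro t ht
    have hnot : ∀ s, 0 ≤ s → -(Real.pi / 2) ≤ (Φ (x, (0:ℝ)) 0 s).1 ∧
        (Φ (x, (0:ℝ)) 0 s).1 ≤ Real.pi / 2 := by
      intro s hs
      by_contra hbad
      push_neg at hbad
      apply hxB
      rcases le_or_gt (-(Real.pi / 2)) (Φ (x, (0:ℝ)) 0 s).1 with hge | hlt
      · exact ⟨s, hs, Or.inl (hbad hge)⟩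
      · exact ⟨s, hs, Or.inr hlt⟩
    have hbd := hnot t ht
    constructor
    · rcases lt_or_eq_of_le hbd.1 with h | h
      · exact h
      exfalso
      -- φ(t) = -(π/2)
      set v := (Φ (x, (0:ℝ)) 0 t).2 with hvdef
      have hder := (hode (x, (0:ℝ)) 0 t ht).1
      rcases lt_trichotomy v 0 with hv | hv | hv
      · -- moving further left: forward crossing
        have hder' : HasDerivWithinAt (fun s => -(Φ (x, (0:ℝ)) 0 s).1) (-v) (Set.Ici 0) t :=
          hder.neg
        obtain ⟨s, hs0, hfs⟩ := aux_forward ht hder' (by linarith)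
        apply hxB
        have hfs' : -(Φ (x, (0:ℝ)) 0 t).1 < -(Φ (x, (0:ℝ)) 0 s).1 := hfs
        refine ⟨s, hs0, Or.inr ?_⟩
        rw [h]
        linarith
      · exact hxB (key_left _ t ht h.symm hv)
      · -- v > 0 : was further left just before (or t = 0 impossible)
        rcases eq_or_lt_of_le ht with h0 | h0
        · have : (Φ (x, (0:ℝ)) 0 t).2 = 0 := by
            rw [← h0, hΦ0]
          rw [← hvdef] at this
          linarith
        · have hder' : HasDerivWithinAt (fun s => -(Φ (x, (0:ℝ)) 0 s).1) (-v) (Set.Ici 0) t :=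
            hder.neg
          obtain ⟨s, hs0, hfs⟩ := aux_backward h0 hder' (by linarith)
          apply hxB
          have hfs' : -(Φ (x, (0:ℝ)) 0 t).1 < -(Φ (x, (0:ℝ)) 0 s).1 := hfs
          refine ⟨s, hs0, Or.inr ?_⟩
          rw [h]
          linarith
    · rcases lt_or_eq_of_le hbd.2 with h | h
      · exact h
      exfalso
      set v := (Φ (x, (0:ℝ)) 0 t).2 with hvdef
      have hder := (hode (x, (0:ℝ)) 0 t ht).1
      rcases lt_trichotomy v 0 with hv | hv | hv
      · rcases eq_or_lt_of_le ht with h0 | h0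
        · have : (Φ (x, (0:ℝ)) 0 t).2 = 0 := by
            rw [← h0, hΦ0]
          rw [← hvdef] at this
          linarith
        · obtain ⟨s, hs0, hfs⟩ := aux_backward h0 hder hv
          apply hxB
          refine ⟨s, hs0, Or.inl ?_⟩
          rw [← h]
          exact hfs
      · exact hxB (key_right _ t ht h hv)
      · obtain ⟨s, hs0, hfs⟩ := aux_forward ht hder hv
        apply hxB
        refine ⟨s, hs0, Or.inl ?_⟩
        rw [← h]
        exact hfs
  -- the two endpoints
  have h0A : ((0:ℝ), (0:ℝ)) ∈ A := by
    intro t ht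
    rw [hequil 0 le_rfl t ht]
    exact ⟨by simpa using hπ, hπ⟩
  have h0L : ((0:ℝ), (0:ℝ)) ∈ L :=
    ⟨0, ⟨by linarith, by linarith⟩, rfl⟩
  have hπB : ((Real.pi / 2 : ℝ), (0:ℝ)) ∈ B := by
    apply key_right _ 0 le_rfl
    · rw [hΦ0]
    · rw [hΦ0]
  have hπL : ((Real.pi / 2 : ℝ), (0:ℝ)) ∈ L :=
    ⟨Real.pi / 2, ⟨by linarith, le_rfl⟩, rfl⟩
  obtain ⟨q, hqL, hqA, hqB⟩ :=
    hLconn A B hAopen hBopen hcover ⟨_, h0L, h0A⟩ ⟨_, hπL, hπB⟩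
  exact hABdisj q hqA hqB
end

section
/- Let M be a topological space, Φ a continuous semi-process on M, and W ⊂ M × ℝ an open set with W⁻ = W⁻⁻. Let x₀ be a uniformly Lyapunov stable equilibrium of Φ, U open with x₀ ∈ U and closure(U) × ℝ ⊂ W, and Γ : [0,1] → M × ℝ a continuous path with Γ(s) ∈ W₀ for s ∈ (0,1), Γ(0) = (x₀,0), Γ(1) ∈ W₀⁻⁻. Suppose, for contradiction, that every point (x,0) on Γ with σ(x) = ∞ satisfies Φ_{0,t}(x) → x₀ as t → ∞. Then the map Ω from Γ to {Γ(0), Γ(1)} defined by Ω(x,0) = Γ(0) if σ(x) = ∞ and Ω(x,0) = Γ(1) if σ(x) < ∞ is a continuous surjection from the connected set Γ([0,1]) onto the two-point set {Γ(0), Γ(1)} — which is impossible; hence there exists a point (x,0) on Γ with σ(x) = ∞ and Φ_{0,t}(x) not converging to x₀. -/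
open scoped ENNReal

/-- The egress time of `x` (with initial time `0`) from `W ⊆ M × ℝ` for the
semi-process `Φ` (written `Φ x t₀ t` for `Φ_{t₀,t}(x)`):
`σ(x) = sup {τ ≥ 0 : (Φ_{0,t}(x), t) ∈ W for all t ∈ [0, τ)}`, valued in `ℝ≥0∞`.
For `(x, 0) ∈ ∂W` this supremum equals `0`. -/
noncomputable def spEgressTime {M : Type*}
    (Φ : M → ℝ → ℝ → M) (W : Set (M × ℝ)) (x : M) : ℝ≥0∞ :=
  sSup {τ : ℝ≥0∞ | ∀ t : ℝ, 0 ≤ t → ENNReal.ofReal t < τ → (Φ x 0 t, t) ∈ W}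

/-- Egress points of `W ⊆ M × ℝ` for the semi-process `Φ`: boundary points
`(x₁, t₁)` such that either `t₁ > 0` and `(x₁, t₁) = (Φ_{0,σ(x)}(x), σ(x))` for some
`(x, 0) ∈ W`, or `t₁ = 0` and the forward trajectory of `x₁` leaves `W ∪ ∂W`
immediately. -/
def spEgress {M : Type*} [TopologicalSpace M]
    (Φ : M → ℝ → ℝ → M) (W : Set (M × ℝ)) : Set (M × ℝ) :=
  {p ∈ frontier W |
    (0 < p.2 ∧ ∃ x : M, (x, (0 : ℝ)) ∈ W ∧ spEgressTime Φ W x ≠ ⊤ ∧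
      p.2 = (spEgressTime Φ W x).toReal ∧ p.1 = Φ x 0 (spEgressTime Φ W x).toReal) ∨
    (p.2 = 0 ∧ ∃ ε > (0 : ℝ), ∀ t ∈ Set.Ioo (0 : ℝ) ε, (Φ p.1 0 t, t) ∉ W ∪ frontier W)}

/-- Strict egress points of `W ⊆ M × ℝ` for the semi-process `Φ`: egress points
whose continued trajectory stays outside `W ∪ ∂W` for a positive time interval
(by the semigroup property, `(Φ_{0,σ(x)+t}(x), σ(x)+t) = (Φ_{t₁,t}(x₁), t₁ + t)`). -/
def spStrictEgress {M : Type*} [TopologicalSpace M]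
    (Φ : M → ℝ → ℝ → M) (W : Set (M × ℝ)) : Set (M × ℝ) :=
  {p ∈ spEgress Φ W |
    ∃ ε > (0 : ℝ), ∀ t ∈ Set.Ioo (0 : ℝ) ε, (Φ p.1 p.2 t, p.2 + t) ∉ W ∪ frontier W}

/-- The section `S_τ = {(x, t) ∈ S : t = τ}` of a subset of the extended phase space. -/
def timeSection {M : Type*} (S : Set (M × ℝ)) (τ : ℝ) : Set (M × ℝ) :=
  {p ∈ S | p.2 = τ}

set_option linter.unusedSectionVars false

section Aux
open Set


variable {M : Type*} [TopologicalSpace M] {Φ : M → ℝ → ℝ → M} {W : Set (M × ℝ)}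

lemma aux_traj_mem {x : M} {t : ℝ} (ht : 0 ≤ t)
    (h : ENNReal.ofReal t < spEgressTime Φ W x) : (Φ x 0 t, t) ∈ W := by
  obtain ⟨τ, hτ, hlt⟩ := lt_sSup_iff.mp h
  exact hτ t ht hlt

lemma aux_le_egress {x : M} {T : ℝ}
    (hmem : ∀ t, 0 ≤ t → t < T → (Φ x 0 t, t) ∈ W) :
    ENNReal.ofReal T ≤ spEgressTime Φ W x :=
  le_sSup fun t ht hlt =>
    hmem t ht ((ENNReal.ofReal_lt_ofReal_iff_of_nonneg ht).mp hlt)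

lemma aux_egress_le {x : M} {T : ℝ} (hT : 0 ≤ T) (h : (Φ x 0 T, T) ∉ W) :
    spEgressTime Φ W x ≤ ENNReal.ofReal T :=
  sSup_le fun _ hτ => le_of_not_gt fun hlt => h (hτ T hT hlt)

lemma aux_top_iff {x : M} :
    spEgressTime Φ W x = ⊤ ↔ ∀ t, 0 ≤ t → (Φ x 0 t, t) ∈ W := by
  constructor
  · intro h t ht
    exact aux_traj_mem ht (by rw [h]; exact ENNReal.ofReal_lt_top)
  · intro h
    exact top_unique (le_sSup fun t ht _ => h t ht)

lemma aux_cont_fixed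
    (hΦcont : ContinuousOn (fun q : M × ℝ × ℝ => Φ q.1 q.2.1 q.2.2) {q | 0 ≤ q.2.2})
    {T : ℝ} (hT : 0 ≤ T) : Continuous fun y : M => Φ y 0 T := by
  have : Continuous fun y : M => (y, ((0 : ℝ), T)) :=
    continuous_id.prodMk continuous_const
  exact hΦcont.comp_continuous this fun y => hT

lemma aux_cont_g
    (hΦcont : ContinuousOn (fun q : M × ℝ × ℝ => Φ q.1 q.2.1 q.2.2) {q | 0 ≤ q.2.2})
    (x : M) : Continuous fun t : ℝ => ((Φ x 0 (max t 0), max t 0) : M × ℝ) := by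
  have h1 : Continuous fun t : ℝ => max t 0 := continuous_id.max continuous_const
  have h2 : Continuous fun t : ℝ => ((x, ((0 : ℝ), max t 0)) : M × ℝ × ℝ) :=
    continuous_const.prodMk (continuous_const.prodMk h1)
  exact (hΦcont.comp_continuous h2 fun t => show (0:ℝ) ≤ max t 0 from le_max_right _ _).prodMk h1

lemma aux_cont_G
    (hΦcont : ContinuousOn (fun q : M × ℝ × ℝ => Φ q.1 q.2.1 q.2.2) {q | 0 ≤ q.2.2}) :
    Continuous fun q : M × ℝ => ((Φ q.1 0 (max q.2 0), max q.2 0) : M × ℝ) := by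
  have h1 : Continuous fun q : M × ℝ => max q.2 0 := continuous_snd.max continuous_const
  have h2 : Continuous fun q : M × ℝ => ((q.1, ((0 : ℝ), max q.2 0)) : M × ℝ × ℝ) :=
    continuous_fst.prodMk (continuous_const.prodMk h1)
  exact (hΦcont.comp_continuous h2 fun q => show (0:ℝ) ≤ max q.2 0 from le_max_right _ _).prodMk h1

lemma aux_closure_subset : closure W ⊆ W ∪ frontier W := by
  intro q hq
  by_cases h : q ∈ W
  · exact Or.inl h
  · exact Or.inr ⟨hq, fun h' => h (interior_subset h')⟩

/-- Case A: near a point with infinite egress time whose trajectory enters a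
stability neighborhood, all points have infinite egress time. -/
lemma aux_caseA
    (hΦcont : ContinuousOn (fun q : M × ℝ × ℝ => Φ q.1 q.2.1 q.2.2) {q | 0 ≤ q.2.2})
    (hΦadd : ∀ (x : M) (t₀ t s : ℝ), 0 ≤ t → 0 ≤ s →
      Φ x t₀ (t + s) = Φ (Φ x t₀ t) (t₀ + t) s)
    (hWopen : IsOpen W) {U : Set M}
    (hUW : (closure U) ×ˢ (Set.univ : Set ℝ) ⊆ W)
    {V : Set M} (hVopen : IsOpen V)
    (hV : ∀ x ∈ V, ∀ t₀ ≥ (0 : ℝ), ∀ t ≥ (0 : ℝ), Φ x t₀ t ∈ U)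
    {x : M} {T : ℝ} (hT : 0 ≤ T) (hxV : Φ x 0 T ∈ V)
    (htraj : ∀ t, 0 ≤ t → (Φ x 0 t, t) ∈ W) :
    ∃ N : Set M, IsOpen N ∧ x ∈ N ∧ ∀ y ∈ N, spEgressTime Φ W y = ⊤ := by
  set G : M × ℝ → M × ℝ := fun q => (Φ q.1 0 (max q.2 0), max q.2 0) with hG
  have hGcont : Continuous G := aux_cont_G hΦcont
  have hsub : ({x} : Set M) ×ˢ Icc 0 T ⊆ G ⁻¹' W := by
    rintro ⟨y, t⟩ ⟨hy, ht0, htT⟩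
    simp only [mem_singleton_iff] at hy
    subst hy
    have : max t 0 = t := max_eq_left ht0
    simp only [mem_preimage, hG, this]
    exact htraj t ht0
  obtain ⟨u, v, hu, hv, hxu, hIv, huv⟩ :=
    generalized_tube_lemma isCompact_singleton isCompact_Icc
      (hWopen.preimage hGcont) hsub
  have hcontT : Continuous fun y : M => Φ y 0 T := aux_cont_fixed hΦcont hT
  refine ⟨u ∩ (fun y : M => Φ y 0 T) ⁻¹' V, hu.inter (hVopen.preimage hcontT),
    ⟨hxu rfl, hxV⟩, ?_⟩
  rintro y ⟨hyu, hyV⟩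
  rw [aux_top_iff]
  intro t ht
  rcases le_or_gt t T with hle | hgt
  · have : (y, t) ∈ u ×ˢ v := ⟨hyu, hIv ⟨ht, hle⟩⟩
    have := huv this
    simpa only [mem_preimage, hG, max_eq_left ht] using this
  · have h1 : Φ y 0 t = Φ (Φ y 0 T) T (t - T) := by
      have := hΦadd y 0 T (t - T) hT (by linarith)
      rw [zero_add] at this
      rw [← this]
      ring_nf
    have h2 : Φ (Φ y 0 T) T (t - T) ∈ U := hV _ hyV T hT (t - T) (by linarith)
    rw [h1]
    exact hUW ⟨subset_closure h2, trivial⟩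

/-- Case B final step: a point whose trajectory leaves the closure of `W` has
a neighborhood of points with finite egress time. -/
lemma aux_caseB_final
    (hΦcont : ContinuousOn (fun q : M × ℝ × ℝ => Φ q.1 q.2.1 q.2.2) {q | 0 ≤ q.2.2})
    {x : M} {T' : ℝ} (hT' : 0 ≤ T')
    (hnot : (Φ x 0 T', T') ∉ closure W) :
    ∃ N : Set M, IsOpen N ∧ x ∈ N ∧ ∀ y ∈ N, spEgressTime Φ W y ≠ ⊤ := by
  have hcont : Continuous fun y : M => ((Φ y 0 T', T') : M × ℝ) :=
    (aux_cont_fixed hΦcont hT').prodMk continuous_const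
  refine ⟨(fun y : M => ((Φ y 0 T', T') : M × ℝ)) ⁻¹' (closure W)ᶜ,
    isClosed_closure.isOpen_compl.preimage hcont, hnot, ?_⟩
  intro y hy
  have h1 : (Φ y 0 T', T') ∉ W := fun h => hy (subset_closure h)
  have h2 := aux_egress_le (Φ := Φ) hT' h1
  exact fun htop => by simp [htop] at h2

end Aux

open Set in
/-- Case B1: an interior starting point with finite egress time: its trajectory
eventually leaves the closure of `W` (using `W⁻ = W⁻⁻`). -/
lemma aux_B1 {M : Type*} [TopologicalSpace M] {Φ : M → ℝ → ℝ → M} {W : Set (M × ℝ)}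
    (hΦcont : ContinuousOn (fun q : M × ℝ × ℝ => Φ q.1 q.2.1 q.2.2) {q | 0 ≤ q.2.2})
    (hΦ0 : ∀ x t₀, Φ x t₀ 0 = x)
    (hΦadd : ∀ (x : M) (t₀ t s : ℝ), 0 ≤ t → 0 ≤ s →
      Φ x t₀ (t + s) = Φ (Φ x t₀ t) (t₀ + t) s)
    (hWopen : IsOpen W)
    (hWeq : spEgress Φ W = spStrictEgress Φ W)
    {x : M} (hxW : ((x, (0 : ℝ)) : M × ℝ) ∈ W)
    (hne : spEgressTime Φ W x ≠ ⊤) :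
    ∃ T' ≥ (0 : ℝ), (Φ x 0 T', T') ∉ closure W := by
  set T : ℝ := (spEgressTime Φ W x).toReal with hTdef
  have hT0 : 0 ≤ T := ENNReal.toReal_nonneg
  have hσT : ENNReal.ofReal T = spEgressTime Φ W x := ENNReal.ofReal_toReal hne
  have h_in : ∀ t, 0 ≤ t → t < T → (Φ x 0 t, t) ∈ W := by
    intro t ht hlt
    refine aux_traj_mem ht ?_
    rw [← hσT]
    exact (ENNReal.ofReal_lt_ofReal_iff_of_nonneg ht).mpr hlt
  set g : ℝ → M × ℝ := fun t => (Φ x 0 (max t 0), max t 0) with hgdef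
  have hgcont : Continuous g := aux_cont_g hΦcont x
  have hg_eq : ∀ t, 0 ≤ t → g t = (Φ x 0 t, t) := by
    intro t ht; simp only [hgdef, max_eq_left ht]
  -- T is positive
  have hT_pos : 0 < T := by
    have hg0 : g 0 ∈ W := by rw [hg_eq 0 le_rfl, hΦ0]; exact hxW
    have hnhds : g ⁻¹' W ∈ nhds (0 : ℝ) :=
      hgcont.continuousAt.preimage_mem_nhds (hWopen.mem_nhds hg0)
    obtain ⟨δ, hδ, hball⟩ := Metric.mem_nhds_iff.mp hnhds
    have hle : ENNReal.ofReal δ ≤ spEgressTime Φ W x := by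
      refine aux_le_egress fun t ht hlt => ?_
      have : t ∈ Metric.ball (0 : ℝ) δ := by
        simp only [Metric.mem_ball, Real.dist_eq, sub_zero, abs_of_nonneg ht]; exact hlt
      have := hball this
      rwa [mem_preimage, hg_eq t ht] at this
    rw [← hσT] at hle
    exact lt_of_lt_of_le hδ ((ENNReal.ofReal_le_ofReal_iff hT0).mp hle)
  -- the trajectory at time T is not in W
  have hnotW : (Φ x 0 T, T) ∉ W := by
    intro hmem
    have hgT : g T ∈ W := by rw [hg_eq T hT0]; exact hmem
    have hnhds : g ⁻¹' W ∈ nhds T :=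
      hgcont.continuousAt.preimage_mem_nhds (hWopen.mem_nhds hgT)
    obtain ⟨δ, hδ, hball⟩ := Metric.mem_nhds_iff.mp hnhds
    have hle : ENNReal.ofReal (T + δ / 2) ≤ spEgressTime Φ W x := by
      refine aux_le_egress fun t ht hlt => ?_
      rcases lt_or_ge t T with h | h
      · exact h_in t ht h
      · have : t ∈ Metric.ball T δ := by
          simp only [Metric.mem_ball, Real.dist_eq, abs_of_nonneg (by linarith : (0:ℝ) ≤ t - T)]
          linarith
        have := hball this
        rwa [mem_preimage, hg_eq t ht] at this
    rw [← hσT] at hle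
    have := (ENNReal.ofReal_le_ofReal_iff hT0).mp hle
    linarith
  -- it is in the closure of W
  have hclos : (Φ x 0 T, T) ∈ closure W := by
    have hTmem : T ∈ closure (Ico (0 : ℝ) T) := by
      rw [closure_Ico (ne_of_lt hT_pos)]
      exact right_mem_Icc.mpr hT0
    have h1 : g T ∈ g '' closure (Ico (0 : ℝ) T) := mem_image_of_mem g hTmem
    have h2 := image_closure_subset_closure_image hgcont h1
    have h3 : g '' Ico (0 : ℝ) T ⊆ W := by
      rintro p ⟨t, ⟨ht0, htT⟩, rfl⟩
      rw [hg_eq t ht0]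
      exact h_in t ht0 htT
    have := closure_mono h3 h2
    rwa [hg_eq T hT0] at this
  -- so it is an egress point, hence a strict egress point
  have hegr : ((Φ x 0 T, T) : M × ℝ) ∈ spEgress Φ W := by
    refine ⟨?_, Or.inl ⟨hT_pos, x, hxW, hne, rfl, rfl⟩⟩
    rw [hWopen.frontier_eq]
    exact ⟨hclos, hnotW⟩
  rw [hWeq] at hegr
  obtain ⟨-, ε, hε, hno⟩ := hegr
  have hkey := hno (ε / 2) ⟨half_pos hε, half_lt_self hε⟩
  have hsemi : Φ x 0 (T + ε / 2) = Φ (Φ x 0 T) T (ε / 2) := by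
    have := hΦadd x 0 T (ε / 2) hT0 (le_of_lt (half_pos hε))
    rwa [zero_add] at this
  refine ⟨T + ε / 2, by linarith, fun hcl => ?_⟩
  rw [hsemi] at hcl
  exact hkey (aux_closure_subset hcl)

open scoped Classical


/-- The contradiction argument in the proof of Theorem 2.13: under its hypotheses,
if every point `(x,0)` on `Γ` with `σ(x) = ∞` had `Φ_{0,t}(x) → x₀`, then the map
`Ω` sending `(x,0)` to `Γ(0)` when `σ(x) = ∞` and to `Γ(1)` when `σ(x) < ∞` would
be a continuous surjection from the connected set `Γ([0,1])` onto the two-point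
set `{Γ(0), Γ(1)}` — which is impossible; hence there is a point `(x,0)` on `Γ`
with `σ(x) = ∞` whose trajectory does not converge to `x₀`. -/
theorem wazewski_contradiction_argument
    {M : Type*} [TopologicalSpace M] (Φ : M → ℝ → ℝ → M)
    (hΦcont : ContinuousOn (fun q : M × ℝ × ℝ => Φ q.1 q.2.1 q.2.2) {q | 0 ≤ q.2.2})
    (hΦ0 : ∀ x t₀, Φ x t₀ 0 = x)
    (hΦadd : ∀ (x : M) (t₀ t s : ℝ), 0 ≤ t → 0 ≤ s →
      Φ x t₀ (t + s) = Φ (Φ x t₀ t) (t₀ + t) s)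
    (W : Set (M × ℝ)) (hWopen : IsOpen W)
    (hWeq : spEgress Φ W = spStrictEgress Φ W)
    (hW0e : (timeSection (spStrictEgress Φ W) 0).Nonempty)
    (x₀ : M)
    (hequil : ∀ t₀ ≥ (0 : ℝ), ∀ t ≥ (0 : ℝ), Φ x₀ t₀ t = x₀)
    (hstab : ∀ U' : Set M, IsOpen U' → x₀ ∈ U' → ∃ V : Set M, IsOpen V ∧ x₀ ∈ V ∧
      ∀ x ∈ V, ∀ t₀ ≥ (0 : ℝ), ∀ t ≥ (0 : ℝ), Φ x t₀ t ∈ U')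
    (U : Set M) (hUopen : IsOpen U) (hx₀U : x₀ ∈ U)
    (hUW : (closure U) ×ˢ (Set.univ : Set ℝ) ⊆ W)
    (Γ : ℝ → M × ℝ) (hΓcont : ContinuousOn Γ (Set.Icc 0 1))
    (hΓW : ∀ s ∈ Set.Ioo (0 : ℝ) 1, Γ s ∈ timeSection W 0)
    (hΓ0 : Γ 0 = (x₀, 0))
    (hΓ1 : Γ 1 ∈ timeSection (spStrictEgress Φ W) 0) :
    ((∀ s ∈ Set.Icc (0 : ℝ) 1, ∀ x : M, Γ s = (x, 0) → spEgressTime Φ W x = ⊤ →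
        Filter.Tendsto (fun t => Φ x 0 t) Filter.atTop (nhds x₀)) →
      (IsConnected (Γ '' Set.Icc 0 1) ∧
       Γ 0 ≠ Γ 1 ∧
       ContinuousOn (fun p : M × ℝ => if spEgressTime Φ W p.1 = ⊤ then Γ 0 else Γ 1)
         (Γ '' Set.Icc 0 1) ∧
       Set.SurjOn (fun p : M × ℝ => if spEgressTime Φ W p.1 = ⊤ then Γ 0 else Γ 1)
         (Γ '' Set.Icc 0 1) {Γ 0, Γ 1}) ∧
      False) ∧
    ∃ s ∈ Set.Icc (0 : ℝ) 1, ∃ x : M, Γ s = (x, 0) ∧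
      spEgressTime Φ W x = ⊤ ∧
      ¬ Filter.Tendsto (fun t => Φ x 0 t) Filter.atTop (nhds x₀) := by
  have hS0 : ∀ s ∈ Set.Icc (0:ℝ) 1, (Γ s).2 = 0 := by
    intro s hs
    rcases eq_or_lt_of_le hs.1 with h0 | h0
    · rw [← h0, hΓ0]
    rcases eq_or_lt_of_le hs.2 with h1 | h1
    · rw [h1]; exact hΓ1.2
    · exact (hΓW s ⟨h0, h1⟩).2
  have hx₀top : spEgressTime Φ W x₀ = ⊤ := aux_top_iff.mpr fun t ht => by
    rw [hequil 0 le_rfl t ht]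
    exact hUW ⟨subset_closure hx₀U, trivial⟩
  obtain ⟨⟨hegr1, ε1, hε1, hno1⟩, hΓ12⟩ := hΓ1
  have hΓ1B : ∃ T' ≥ (0:ℝ), (Φ (Γ 1).1 0 T', T') ∉ closure W := by
    refine ⟨ε1/2, le_of_lt (half_pos hε1), fun hcl => ?_⟩
    have hthis := hno1 (ε1/2) ⟨half_pos hε1, half_lt_self hε1⟩
    rw [hΓ12, zero_add] at hthis
    exact hthis (aux_closure_subset hcl)
  have key : (∀ s ∈ Set.Icc (0:ℝ) 1, ∀ x : M, Γ s = (x, 0) →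
      spEgressTime Φ W x = ⊤ →
      Filter.Tendsto (fun t => Φ x 0 t) Filter.atTop (nhds x₀)) → False := by
    intro H
    obtain ⟨V, hVopen, hVx₀, hV⟩ := hstab U hUopen hx₀U
    have hloc : ∀ p ∈ Γ '' Set.Icc (0:ℝ) 1, ∃ N : Set (M × ℝ), IsOpen N ∧ p ∈ N ∧
        ((∀ q ∈ N, spEgressTime Φ W q.1 = ⊤) ∨ (∀ q ∈ N, spEgressTime Φ W q.1 ≠ ⊤)) := by
      rintro p ⟨s, hs, rfl⟩
      have h2 : (Γ s).2 = 0 := hS0 s hs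
      have hpe : Γ s = ((Γ s).1, (0:ℝ)) := by rw [← h2]
      by_cases hσ : spEgressTime Φ W (Γ s).1 = ⊤
      · have htend := H s hs (Γ s).1 hpe hσ
        have htraj := aux_top_iff.mp hσ
        obtain ⟨T, hTV, hT0⟩ := ((htend.eventually_mem (hVopen.mem_nhds hVx₀)).and
          (Filter.eventually_ge_atTop (0:ℝ))).exists
        obtain ⟨N, hNopen, hNx, hNall⟩ :=
          aux_caseA hΦcont hΦadd hWopen hUW hVopen hV hT0 hTV htraj
        refine ⟨Prod.fst ⁻¹' N, hNopen.preimage continuous_fst, hNx, Or.inl ?_⟩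
        intro q hq; exact hNall q.1 hq
      · have hB : ∃ T' ≥ (0:ℝ), (Φ (Γ s).1 0 T', T') ∉ closure W := by
          rcases eq_or_lt_of_le hs.1 with h0 | h0
          · exfalso; apply hσ; rw [← h0, hΓ0]; exact hx₀top
          rcases eq_or_lt_of_le hs.2 with h1 | h1
          · rw [h1]; exact hΓ1B
          · have hmem : Γ s ∈ W := (hΓW s ⟨h0, h1⟩).1
            have hmem' : ((Γ s).1, (0:ℝ)) ∈ W := hpe ▸ hmem
            exact aux_B1 hΦcont hΦ0 hΦadd hWopen hWeq hmem' hσ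
        obtain ⟨T', hT', hnot⟩ := hB
        obtain ⟨N, hNopen, hNx, hNall⟩ := aux_caseB_final hΦcont hT' hnot
        refine ⟨Prod.fst ⁻¹' N, hNopen.preimage continuous_fst, hNx, Or.inr ?_⟩
        intro q hq; exact hNall q.1 hq
    set S := Γ '' Set.Icc (0:ℝ) 1 with hSdef
    have hconn : IsPreconnected S := (isPreconnected_Icc).image Γ hΓcont
    set u := ⋃₀ {N : Set (M × ℝ) | IsOpen N ∧ ∀ q ∈ N, spEgressTime Φ W q.1 = ⊤} with hudef
    set v := ⋃₀ {N : Set (M × ℝ) | IsOpen N ∧ ∀ q ∈ N, spEgressTime Φ W q.1 ≠ ⊤} with hvdef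
    have hu : IsOpen u := isOpen_sUnion fun N hN => hN.1
    have hv : IsOpen v := isOpen_sUnion fun N hN => hN.1
    have hcov : S ⊆ u ∪ v := by
      intro p hp
      obtain ⟨N, hNo, hpN, hN⟩ := hloc p hp
      rcases hN with h | h
      · exact Or.inl ⟨N, ⟨hNo, h⟩, hpN⟩
      · exact Or.inr ⟨N, ⟨hNo, h⟩, hpN⟩
    have hΓ0S : Γ 0 ∈ S := ⟨0, ⟨le_rfl, zero_le_one⟩, rfl⟩
    have hΓ1S : Γ 1 ∈ S := ⟨1, ⟨zero_le_one, le_rfl⟩, rfl⟩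
    have hσ0 : spEgressTime Φ W (Γ 0).1 = ⊤ := by rw [hΓ0]; exact hx₀top
    have hne1 : (S ∩ u).Nonempty := by
      obtain ⟨N, hNo, hpN, hN⟩ := hloc (Γ 0) hΓ0S
      rcases hN with h | h
      · exact ⟨Γ 0, hΓ0S, N, ⟨hNo, h⟩, hpN⟩
      · exact absurd hσ0 (h _ hpN)
    have hσ1 : spEgressTime Φ W (Γ 1).1 ≠ ⊤ := by
      obtain ⟨T', hT', hnot⟩ := hΓ1B
      intro h
      exact hnot (subset_closure (aux_top_iff.mp h T' hT'))
    have hne2 : (S ∩ v).Nonempty := by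
      obtain ⟨N, hNo, hpN, hN⟩ := hloc (Γ 1) hΓ1S
      rcases hN with h | h
      · exact absurd (h _ hpN) hσ1
      · exact ⟨Γ 1, hΓ1S, N, ⟨hNo, h⟩, hpN⟩
    obtain ⟨q, hqS, hqu, hqv⟩ := hconn u v hu hv hcov hne1 hne2
    obtain ⟨N1, hN1, hqN1⟩ := hqu
    obtain ⟨N2, hN2, hqN2⟩ := hqv
    exact hN2.2 q hqN2 (hN1.2 q hqN1)
  constructor
  · intro H
    exact (key H).elim
  · by_contra hcon
    push_neg at hcon
    exact key hcon
end
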